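/- arXiv:2007.00534 — 5 statements merged into one kernel-verified Lean document; each statement's English description precedes it below -/
import Mathlib

section
/- Under the oracle restart rule with γ_k = r^k γ_0, the k-th inter-restart duration satisfies Δn_{k+1} ≤ (1/(r^k γ_0 μ)) log(2/r) for all k ≥ 1, and consequently the cumulative time after the first restart satisfies n_k − Δn_1 ≤ (1/(μ(1−r) γ_{k−1})) log(2/r). -/
/-- **Inter-restart durations of the oracle diagnostic.**
Under the oracle restart rule with `γ_k = r^k γ_0`, the durations satisfy
`Δn_{k+1} ≤ (1/(r^k γ_0 μ)) log(2/r)` for all `k ≥ 1`, and consequently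
`n_k − Δn_1 ≤ (1/(μ(1−r)γ_{k−1})) log(2/r)`. -/
theorem stmt3 (γ0 μ σ r : ℝ) (hγ0 : 0 < γ0) (hμ : 0 < μ) (hσ : 0 < σ)
    (hr : r ∈ Set.Ioo (0 : ℝ) 1)
    (γk : ℕ → ℝ) (hγk : ∀ k, γk k = r ^ k * γ0)
    (δnk Δn nk : ℕ → ℝ)
    (hδpos : ∀ k, 0 < δnk k)
    -- oracle restart criterion
    (horacle : ∀ k, Real.exp (-(Δn (k + 1)) * γk k * μ) * δnk k = 2 * σ ^ 2 * γk k / μ)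
    -- by construction, at restart `k ≥ 1` one has `δ_{n_k} ≤ 4σ²γ_{k−1}/μ`
    (hδ : ∀ k, 1 ≤ k → δnk k ≤ 4 * σ ^ 2 * γk (k - 1) / μ)
    (hnk : ∀ k, nk k = ∑ i ∈ Finset.Icc 1 k, Δn i) :
    ∀ k, 1 ≤ k →
      Δn (k + 1) ≤ 1 / (r ^ k * γ0 * μ) * Real.log (2 / r) ∧
      nk k - Δn 1 ≤ 1 / (μ * (1 - r) * γk (k - 1)) * Real.log (2 / r) := by
  obtain ⟨hr0, hr1⟩ := hr
  set L := Real.log (2 / r) with hLdef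
  have hL : 0 ≤ L := Real.log_nonneg (by rw [le_div_iff₀ hr0]; linarith)
  have hγpos : ∀ k, 0 < γk k := fun k => by
    rw [hγk]; positivity
  have hΔ : ∀ k, 1 ≤ k → Δn (k + 1) ≤ 1 / (r ^ k * γ0 * μ) * L := by
    intro k hk
    have hδne := (hδpos k).ne'
    have hCpos : 0 < 2 * σ ^ 2 * γk k / μ := by
      have := hγpos k; positivity
    have h1 : Real.exp (-(Δn (k + 1)) * γk k * μ) = 2 * σ ^ 2 * γk k / μ / δnk k :=
      (eq_div_iff hδne).mpr (horacle k)
    have h2 : -(Δn (k + 1)) * γk k * μ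
        = Real.log (2 * σ ^ 2 * γk k / μ / δnk k) := by
      rw [← h1, Real.log_exp]
    have h2' : -Δn (k + 1) * γk k * μ
        = Real.log (2 * σ ^ 2 * γk k / μ) - Real.log (δnk k) := by
      rw [h2, Real.log_div hCpos.ne' hδne]
    have h3 : Δn (k + 1) * (γk k * μ)
        = Real.log (δnk k / (2 * σ ^ 2 * γk k / μ)) := by
      rw [Real.log_div hδne hCpos.ne']
      linear_combination -h2'
    -- bound the ratio
    have hratio : δnk k / (2 * σ ^ 2 * γk k / μ) ≤ 2 / r := by
      rw [div_le_div_iff₀ (by positivity) hr0]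
      have hδk := hδ k hk
      have hpow : r ^ k = r ^ (k - 1) * r := by
        rw [← pow_succ]; congr 1; omega
      have h4 : δnk k * r ≤ (4 * σ ^ 2 * γk (k - 1) / μ) * r :=
        mul_le_mul_of_nonneg_right hδk hr0.le
      calc δnk k * r ≤ 4 * σ ^ 2 * γk (k - 1) / μ * r := h4
        _ = 2 * (2 * σ ^ 2 * γk k / μ) := by
            rw [hγk, hγk, hpow]; field_simp; ring
    have h5 : Δn (k + 1) * (γk k * μ) ≤ L := by
      rw [h3, hLdef]
      exact Real.log_le_log (div_pos (hδpos k) hCpos) hratio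
    have hgm : 0 < γk k * μ := mul_pos (hγpos k) hμ
    rw [hγk] at h5 hgm
    rw [div_mul_eq_mul_div, le_div_iff₀ (by rw [mul_assoc] at hgm ⊢; exact hgm)]
    linarith [h5]
  intro k hk
  refine ⟨hΔ k hk, ?_⟩
  -- second part by induction on k ≥ 1
  induction k with
  | zero => omega
  | succ n ih =>
    rcases Nat.eq_or_lt_of_le hk with h | h
    · -- n + 1 = 1, i.e. n = 0
      have hn : n = 0 := by omega
      subst hn
      rw [hnk]
      simp only [Finset.Icc_self, Finset.sum_singleton]
      have h1r : (0:ℝ) < 1 - r := by linarith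
      have hp : 0 < μ * (1 - r) * γk (1 - 1) := mul_pos (mul_pos hμ h1r) (hγpos _)
      have : (0:ℝ) ≤ 1 / (μ * (1 - r) * γk (1 - 1)) * L :=
        mul_nonneg (one_div_pos.mpr hp).le hL
      simpa using this
    · have hn1 : 1 ≤ n := by omega
      have ihn := ih hn1
      have hΔn1 := hΔ n hn1
      have hsum : nk (n + 1) = nk n + Δn (n + 1) := by
        rw [hnk, hnk, Finset.sum_Icc_succ_top (by omega : 1 ≤ n + 1)]
      rw [hsum]
      have hsimp : Nat.succ n - 1 = n := rfl
      have h1r : 0 < 1 - r := by linarith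
      have key : 1 / (μ * (1 - r) * γk (n - 1)) * L + 1 / (r ^ n * γ0 * μ) * L
          = 1 / (μ * (1 - r) * γk n) * L := by
        rw [hγk, hγk]
        have hpow : r ^ n = r ^ (n - 1) * r := by
          rw [← pow_succ]; congr 1; omega
        rw [hpow]
        have hrn : (0:ℝ) < r ^ (n - 1) := pow_pos hr0 _
        field_simp
        ring
      have hgoal : (n + 1) - 1 = n := rfl
      rw [hgoal]
      linarith [ihn, hΔn1, key]
end

section
/- Let f(θ) = ½ θᵀHθ with H symmetric positive definite, and consider SGD θ_{n} = (I − γH)θ_{n−1} + γξ_n with i.i.d. zero-mean noise ξ_n of covariance C, independent of θ_0, and γ ≤ 1/(2L) where L = ‖H‖. Then for any polynomial P, E[⟨η_n, P(H)η_n⟩] = η_0ᵀ P(H)(I − γH)^{2n} η_0 + γ tr( P(H) C [I − (I − γH)^{2n}] H^{-1} (2I − γH)^{-1} ), where η_n = θ_n − θ*. -/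
open MeasureTheory ProbabilityTheory Polynomial Matrix

section Aux
variable {d : ℕ} {Ω : Type*} [MeasureSpace Ω] [IsProbabilityMeasure (volume : Measure Ω)]

-- coordinate of an L² random vector is integrable
lemma aux_int_coord (X : Ω → Fin d → ℝ) (hm : Measurable X)
    (h2 : Integrable (fun ω => ‖X ω‖ ^ 2)) (a : Fin d) :
    Integrable (fun ω => X ω a) := by
  refine Integrable.mono' (g := fun ω => (1 + ‖X ω‖ ^ 2) / 2)
    (((integrable_const (1:ℝ)).add h2).div_const 2)
    ((measurable_pi_apply a).comp hm).aestronglyMeasurable ?_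
  filter_upwards with ω
  have h1 : |X ω a| ≤ ‖X ω‖ := by
    simpa [Real.norm_eq_abs] using norm_le_pi_norm (X ω) a
  have h0 : (0:ℝ) ≤ ‖X ω‖ := norm_nonneg _
  rw [Real.norm_eq_abs]
  nlinarith [abs_nonneg (X ω a), sq_nonneg (‖X ω‖ - 1)]

lemma aux_int_vec (X : Ω → Fin d → ℝ) (hm : Measurable X)
    (h2 : Integrable (fun ω => ‖X ω‖ ^ 2)) : Integrable X := by
  refine Integrable.mono' (g := fun ω => (1 + ‖X ω‖ ^ 2) / 2)
    (((integrable_const (1:ℝ)).add h2).div_const 2) hm.aestronglyMeasurable ?_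
  filter_upwards with ω
  nlinarith [norm_nonneg (X ω), sq_nonneg (‖X ω‖ - 1)]

lemma aux_int_prod (X Y : Ω → Fin d → ℝ) (hmX : Measurable X) (hmY : Measurable Y)
    (h2X : Integrable (fun ω => ‖X ω‖ ^ 2)) (h2Y : Integrable (fun ω => ‖Y ω‖ ^ 2))
    (a b : Fin d) : Integrable (fun ω => X ω a * Y ω b) := by
  refine Integrable.mono' (g := fun ω => (‖X ω‖ ^ 2 + ‖Y ω‖ ^ 2) / 2)
    ((h2X.add h2Y).div_const 2)
    (((measurable_pi_apply a).comp hmX).mul ((measurable_pi_apply b).comp hmY)).aestronglyMeasurable ?_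
  filter_upwards with ω
  have h1 : |X ω a| ≤ ‖X ω‖ := by
    simpa [Real.norm_eq_abs] using norm_le_pi_norm (X ω) a
  have h1' : |Y ω b| ≤ ‖Y ω‖ := by
    simpa [Real.norm_eq_abs] using norm_le_pi_norm (Y ω) b
  rw [Real.norm_eq_abs, abs_mul]
  have h3 : |X ω a| * |Y ω b| ≤ ‖X ω‖ * ‖Y ω‖ :=
    mul_le_mul h1 h1' (abs_nonneg _) (norm_nonneg _)
  nlinarith [sq_nonneg (‖X ω‖ - ‖Y ω‖)]

end Aux

section Aux2
variable {d : ℕ} {Ω : Type*} [MeasureSpace Ω] [IsProbabilityMeasure (volume : Measure Ω)]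

lemma aux_mean_coord (X : Ω → Fin d → ℝ) (hint : Integrable X)
    (hm : ∫ ω, X ω = 0) (a : Fin d) : ∫ ω, X ω a = 0 := by
  have := (ContinuousLinearMap.proj (R := ℝ) (φ := fun _ : Fin d => ℝ) a).integral_comp_comm hint
  simpa [hm] using this

lemma aux_dot_int (w : Fin d → ℝ) (X : Ω → Fin d → ℝ) (hm : Measurable X)
    (h2 : Integrable (fun ω => ‖X ω‖ ^ 2)) (hmean : ∀ a, ∫ ω, X ω a = 0) :
    ∫ ω, w ⬝ᵥ X ω = 0 := by
  simp only [dotProduct]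
  rw [integral_finset_sum _ (fun b _ => (aux_int_coord X hm h2 b).const_mul (w b))]
  simp [integral_const_mul, hmean]

lemma aux_dot_integrable (w : Fin d → ℝ) (X : Ω → Fin d → ℝ) (hm : Measurable X)
    (h2 : Integrable (fun ω => ‖X ω‖ ^ 2)) :
    Integrable (fun ω => w ⬝ᵥ X ω) := by
  simp only [dotProduct]
  exact integrable_finset_sum _ (fun b _ => (aux_int_coord X hm h2 b).const_mul (w b))

lemma aux_quad_eq (N : Matrix (Fin d) (Fin d) ℝ) (X Y : Ω → Fin d → ℝ) (ω : Ω) :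
    X ω ⬝ᵥ (N *ᵥ Y ω) = ∑ a, ∑ b, N a b * (X ω a * Y ω b) := by
  simp only [dotProduct, mulVec, Finset.mul_sum]
  exact Finset.sum_congr rfl fun a _ => Finset.sum_congr rfl fun b _ => by ring

lemma aux_quad_integrable (N : Matrix (Fin d) (Fin d) ℝ) (X Y : Ω → Fin d → ℝ)
    (hmX : Measurable X) (hmY : Measurable Y)
    (h2X : Integrable (fun ω => ‖X ω‖ ^ 2)) (h2Y : Integrable (fun ω => ‖Y ω‖ ^ 2)) :
    Integrable (fun ω => X ω ⬝ᵥ (N *ᵥ Y ω)) := by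
  have : (fun ω => X ω ⬝ᵥ (N *ᵥ Y ω)) =
      fun ω => ∑ a, ∑ b, N a b * (X ω a * Y ω b) := funext fun ω => aux_quad_eq N X Y ω
  rw [this]
  exact integrable_finset_sum _ fun a _ => integrable_finset_sum _ fun b _ =>
    (aux_int_prod X Y hmX hmY h2X h2Y a b).const_mul _

lemma aux_quad_int (N : Matrix (Fin d) (Fin d) ℝ) (X Y : Ω → Fin d → ℝ)
    (hmX : Measurable X) (hmY : Measurable Y)
    (h2X : Integrable (fun ω => ‖X ω‖ ^ 2)) (h2Y : Integrable (fun ω => ‖Y ω‖ ^ 2)) :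
    ∫ ω, X ω ⬝ᵥ (N *ᵥ Y ω) = ∑ a, ∑ b, N a b * ∫ ω, X ω a * Y ω b := by
  have : (fun ω => X ω ⬝ᵥ (N *ᵥ Y ω)) =
      fun ω => ∑ a, ∑ b, N a b * (X ω a * Y ω b) := funext fun ω => aux_quad_eq N X Y ω
  rw [this]
  rw [integral_finset_sum Finset.univ (fun a _ => integrable_finset_sum Finset.univ fun b _ =>
    (aux_int_prod X Y hmX hmY h2X h2Y a b).const_mul (N a b))]
  refine Finset.sum_congr rfl fun a _ => ?_
  rw [integral_finset_sum _ (fun b _ => (aux_int_prod X Y hmX hmY h2X h2Y a b).const_mul (N a b))]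
  exact Finset.sum_congr rfl fun b _ => integral_const_mul _ _

-- independence of coordinates of distinct noise vectors
lemma aux_indep_prod_int (X Y : Ω → Fin d → ℝ) (hmX : Measurable X) (hmY : Measurable Y)
    (h2X : Integrable (fun ω => ‖X ω‖ ^ 2)) (h2Y : Integrable (fun ω => ‖Y ω‖ ^ 2))
    (hindep : IndepFun X Y) (hmeanX : ∀ a, ∫ ω, X ω a = 0) (a b : Fin d) :
    ∫ ω, X ω a * Y ω b = 0 := by
  have h := hindep.comp (measurable_pi_apply a) (measurable_pi_apply b)
  have := h.integral_fun_mul_eq_mul_integral (aux_int_coord X hmX h2X a).aestronglyMeasurable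
    (aux_int_coord Y hmY h2Y b).aestronglyMeasurable
  have h2 : ∫ ω, X ω a * Y ω b = (∫ ω, X ω a) * ∫ ω, Y ω b := this
  rw [h2, hmeanX a, zero_mul]

end Aux2

section Aux3
variable {d : ℕ}

lemma aux_commute_inv (X Y : Matrix (Fin d) (Fin d) ℝ) (h : Commute X Y)
    (hY : IsUnit Y.det) : Commute X Y⁻¹ := by
  have h1 : Y⁻¹ * (X * Y) * Y⁻¹ = Y⁻¹ * (Y * X) * Y⁻¹ := by rw [h.eq]
  calc X * Y⁻¹ = Y⁻¹ * Y * X * Y⁻¹ := by rw [Y.nonsing_inv_mul hY, one_mul]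
    _ = Y⁻¹ * (Y * X) * Y⁻¹ := by rw [Matrix.mul_assoc (Y⁻¹) Y X]
    _ = Y⁻¹ * (X * Y) * Y⁻¹ := by rw [h.eq]
    _ = Y⁻¹ * X * (Y * Y⁻¹) := by rw [Matrix.mul_assoc, Matrix.mul_assoc, Matrix.mul_assoc]
    _ = Y⁻¹ * X := by rw [Y.mul_nonsing_inv hY, mul_one]

lemma aux_commute_aeval (X H : Matrix (Fin d) (Fin d) ℝ) (h : Commute X H) (P : Polynomial ℝ) :
    Commute X (aeval H P) := by
  rw [aeval_eq_sum_range]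
  exact Commute.sum_right _ _ _ fun i _ => (h.pow_right i).smul_right _

end Aux3

section Aux4
variable {d : ℕ}

lemma aux_mv (N : Matrix (Fin d) (Fin d) ℝ) (x w : Fin d → ℝ) :
    (N *ᵥ x) ⬝ᵥ w = x ⬝ᵥ (Nᵀ *ᵥ w) := by
  rw [Matrix.dotProduct_mulVec, Matrix.vecMul_transpose, dotProduct_comm]

lemma aux_dot_sum {ι : Type*} (v : Fin d → ℝ) (s : Finset ι) (f : ι → Fin d → ℝ) :
    v ⬝ᵥ (∑ k ∈ s, f k) = ∑ k ∈ s, v ⬝ᵥ f k := by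
  simp only [dotProduct, Finset.sum_apply, Finset.mul_sum]
  exact Finset.sum_comm

lemma aux_sum_dot {ι : Type*} (v : Fin d → ℝ) (s : Finset ι) (f : ι → Fin d → ℝ) :
    (∑ k ∈ s, f k) ⬝ᵥ v = ∑ k ∈ s, f k ⬝ᵥ v := by
  rw [dotProduct_comm, aux_dot_sum]
  exact Finset.sum_congr rfl fun k _ => dotProduct_comm _ _

lemma aux_mulVec_sum {ι : Type*} (B : Matrix (Fin d) (Fin d) ℝ) (s : Finset ι)
    (f : ι → Fin d → ℝ) : B *ᵥ (∑ k ∈ s, f k) = ∑ k ∈ s, B *ᵥ f k := by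
  have := map_sum B.mulVecLin f s
  simp only [Matrix.mulVecLin_apply] at this
  exact this

end Aux4
/-- **Lemma (closed-form second moment for SGD on quadratics).**
For `f(θ) = ½θᵀHθ` with `H` symmetric positive definite, SGD with additive
i.i.d. zero-mean noise of covariance `C` and step `γ ≤ 1/(2‖H‖)` satisfies, for
any polynomial `P`,
`E⟨η_n, P(H)η_n⟩ = η₀ᵀP(H)(I−γH)^{2n}η₀ + γ tr(P(H) C (I−(I−γH)^{2n}) H⁻¹ (2I−γH)⁻¹)`. -/
theorem stmt5 {d : ℕ} {Ω : Type*} [MeasureSpace Ω]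
    [IsProbabilityMeasure (volume : Measure Ω)]
    (H C : Matrix (Fin d) (Fin d) ℝ) (hH : H.PosDef)
    (γ : ℝ) (hγpos : 0 < γ)
    -- `γ ≤ 1/(2L)` with `L = ‖H‖`, i.e. `γ H ≼ ½ I`
    (hγ : ∀ v : Fin d → ℝ, γ * (v ⬝ᵥ H.mulVec v) ≤ (1 / 2) * (v ⬝ᵥ v))
    (ξ : ℕ → Ω → (Fin d → ℝ)) (η : ℕ → Ω → (Fin d → ℝ)) (η0 : Fin d → ℝ)
    (hmeas : ∀ i, Measurable (ξ i))
    -- i.i.d. noise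
    (hindep : iIndepFun ξ volume)
    (hident : ∀ i j, Measure.map (ξ i) volume = Measure.map (ξ j) volume)
    -- zero mean, covariance `C`, square integrable
    (hmean : ∀ i, ∫ ω, ξ i ω = 0)
    (hcov : ∀ i a b, ∫ ω, ξ i ω a * ξ i ω b = C a b)
    (hL2 : ∀ i, Integrable (fun ω => ‖ξ i ω‖ ^ 2))
    -- deterministic initialization and SGD recursion
    (hη0 : ∀ ω, η 0 ω = η0)
    (hrec : ∀ k ω, η (k + 1) ω = (1 - γ • H).mulVec (η k ω) + γ • ξ (k + 1) ω)
    (P : Polynomial ℝ) (n : ℕ) :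
    ∫ ω, (η n ω) ⬝ᵥ ((aeval H P).mulVec (η n ω)) =
      η0 ⬝ᵥ ((aeval H P * (1 - γ • H) ^ (2 * n)).mulVec η0) +
      γ * Matrix.trace
        (aeval H P * C * (1 - (1 - γ • H) ^ (2 * n)) * H⁻¹ *
          ((2 : ℝ) • (1 : Matrix (Fin d) (Fin d) ℝ) - γ • H)⁻¹) := by
  classical
  set M : Matrix (Fin d) (Fin d) ℝ := 1 - γ • H with hMdef
  set A : Matrix (Fin d) (Fin d) ℝ := aeval H P with hAdef
  set V : Matrix (Fin d) (Fin d) ℝ :=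
    (2 : ℝ) • (1 : Matrix (Fin d) (Fin d) ℝ) - γ • H with hVdef
  have hγne : γ ≠ 0 := ne_of_gt hγpos
  have hHt : Hᵀ = H := by
    have := hH.1
    rwa [Matrix.IsHermitian, conjTranspose_eq_transpose_of_trivial] at this
  -- commutation facts
  have hHM : Commute H M := (Commute.one_right H).sub_right ((Commute.refl H).smul_right γ)
  have hHV : Commute H V :=
    ((Commute.one_right H).smul_right 2).sub_right ((Commute.refl H).smul_right γ)
  have hVM : Commute V M := (Commute.one_right V).sub_right (hHV.symm.smul_right γ)
  have hMA : Commute M A := aux_commute_aeval M H hHM.symm P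
  have hVA : Commute V A := aux_commute_aeval V H hHV.symm P
  have hHA : Commute H A := aux_commute_aeval H H (Commute.refl H) P
  have hMt : Mᵀ = M := by
    rw [hMdef]; simp [Matrix.transpose_sub, Matrix.transpose_smul, hHt]
  -- positive definiteness of V
  have hVpd : V.PosDef := by
    refine Matrix.PosDef.of_dotProduct_mulVec_pos ?_ ?_
    · rw [Matrix.IsHermitian, conjTranspose_eq_transpose_of_trivial, hVdef]
      simp [Matrix.transpose_sub, Matrix.transpose_smul, hHt]
    · intro v hv
      have hsv : star v = v := by simp
      have h0 : (0:ℝ) ≤ v ⬝ᵥ v := Finset.sum_nonneg fun i _ => mul_self_nonneg _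
      have hne : v ⬝ᵥ v ≠ 0 := fun h => hv (dotProduct_self_eq_zero.mp h)
      have h1 : (0:ℝ) < v ⬝ᵥ v := lt_of_le_of_ne h0 (Ne.symm hne)
      have hq := hγ v
      have hVv : V *ᵥ v = (2:ℝ) • v - γ • (H *ᵥ v) := by
        rw [hVdef, Matrix.sub_mulVec, Matrix.smul_mulVec, Matrix.smul_mulVec,
          Matrix.one_mulVec]
      rw [hsv, hVv, dotProduct_sub, dotProduct_smul, dotProduct_smul]
      simp only [smul_eq_mul]
      linarith
  have hHunit : IsUnit H.det := hH.det_pos.ne'.isUnit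
  have hVunit : IsUnit V.det := hVpd.det_pos.ne'.isUnit
  -- mean and covariance coordinates
  have hmean0 : ∀ i a, ∫ ω, ξ i ω a = 0 := fun i a =>
    aux_mean_coord (ξ i) (aux_int_vec (ξ i) (hmeas i) (hL2 i)) (hmean i) a
  have hCsymm : ∀ a b, C a b = C b a := by
    intro a b
    rw [← hcov 0 a b, ← hcov 0 b a]
    have : (fun ω => ξ 0 ω a * ξ 0 ω b) = fun ω => ξ 0 ω b * ξ 0 ω a :=
      funext fun ω => mul_comm _ _
    rw [this]
  -- unrolling the recursion
  have hun : ∀ m, ∀ ω, η m ω =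
      (M ^ m) *ᵥ η0 + ∑ k ∈ Finset.range m, γ • ((M ^ k) *ᵥ ξ (m - k) ω) := by
    intro m
    induction m with
    | zero => intro ω; simpa using hη0 ω
    | succ m ih =>
      intro ω
      rw [hrec m ω, ih ω, Matrix.mulVec_add, Matrix.mulVec_mulVec, aux_mulVec_sum,
        Finset.sum_range_succ']
      have hterm : ∀ k, M *ᵥ (γ • ((M ^ k) *ᵥ ξ (m - k) ω)) =
          γ • ((M ^ (k+1)) *ᵥ ξ (m + 1 - (k+1)) ω) := by
        intro k
        rw [Matrix.mulVec_smul, Matrix.mulVec_mulVec, ← pow_succ', Nat.succ_sub_succ]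
      rw [Finset.sum_congr rfl fun k _ => hterm k, ← pow_succ']
      simp only [pow_zero, Matrix.one_mulVec, Nat.sub_zero]
      abel
  set u : Fin d → ℝ := (M ^ n) *ᵥ η0 with hu
  -- pointwise expansion of the quadratic form
  have hpt : ∀ ω, η n ω ⬝ᵥ (A *ᵥ η n ω) =
      u ⬝ᵥ (A *ᵥ u)
      + (∑ k ∈ Finset.range n, γ * ((u ᵥ* (A * M ^ k)) ⬝ᵥ ξ (n - k) ω))
      + (∑ k ∈ Finset.range n, γ * (((M ^ k * A) *ᵥ u) ⬝ᵥ ξ (n - k) ω))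
      + ∑ k ∈ Finset.range n, ∑ l ∈ Finset.range n,
          (γ * γ) * (ξ (n - k) ω ⬝ᵥ ((M ^ k * A * M ^ l) *ᵥ ξ (n - l) ω)) := by
    intro ω
    rw [hun n ω]
    set s : Fin d → ℝ := ∑ k ∈ Finset.range n, γ • ((M ^ k) *ᵥ ξ (n - k) ω) with hs
    rw [Matrix.mulVec_add, dotProduct_add, add_dotProduct, add_dotProduct]
    have h2 : u ⬝ᵥ (A *ᵥ s) =
        ∑ k ∈ Finset.range n, γ * ((u ᵥ* (A * M ^ k)) ⬝ᵥ ξ (n - k) ω) := by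
      rw [hs, aux_mulVec_sum, aux_dot_sum]
      refine Finset.sum_congr rfl fun k _ => ?_
      rw [Matrix.mulVec_smul, dotProduct_smul, Matrix.mulVec_mulVec,
        Matrix.dotProduct_mulVec, smul_eq_mul]
    have h3 : s ⬝ᵥ (A *ᵥ u) =
        ∑ k ∈ Finset.range n, γ * (((M ^ k * A) *ᵥ u) ⬝ᵥ ξ (n - k) ω) := by
      rw [hs, aux_sum_dot]
      refine Finset.sum_congr rfl fun k _ => ?_
      rw [smul_dotProduct, aux_mv, Matrix.transpose_pow, hMt, Matrix.mulVec_mulVec,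
        smul_eq_mul, dotProduct_comm]
    have h4 : s ⬝ᵥ (A *ᵥ s) =
        ∑ k ∈ Finset.range n, ∑ l ∈ Finset.range n,
          (γ * γ) * (ξ (n - k) ω ⬝ᵥ ((M ^ k * A * M ^ l) *ᵥ ξ (n - l) ω)) := by
      rw [hs, aux_sum_dot]
      refine Finset.sum_congr rfl fun k _ => ?_
      rw [smul_dotProduct, aux_mv, Matrix.transpose_pow, hMt, Matrix.mulVec_mulVec,
        ← hs]
      have h5 : (M ^ k * A) *ᵥ s =
          ∑ l ∈ Finset.range n, γ • ((M ^ k * A * M ^ l) *ᵥ ξ (n - l) ω) := by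
        rw [hs, aux_mulVec_sum]
        refine Finset.sum_congr rfl fun l _ => ?_
        rw [Matrix.mulVec_smul, Matrix.mulVec_mulVec]
      rw [h5, aux_dot_sum, smul_eq_mul, Finset.mul_sum]
      refine Finset.sum_congr rfl fun l _ => ?_
      rw [dotProduct_smul, smul_eq_mul]
      ring
    rw [h2, h3, h4]
    ring
  -- integrability of the pieces
  have hInt2 : Integrable (fun ω =>
      ∑ k ∈ Finset.range n, γ * ((u ᵥ* (A * M ^ k)) ⬝ᵥ ξ (n - k) ω)) :=
    integrable_finset_sum _ fun k _ =>
      (aux_dot_integrable _ _ (hmeas _) (hL2 _)).const_mul γ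
  have hInt3 : Integrable (fun ω =>
      ∑ k ∈ Finset.range n, γ * (((M ^ k * A) *ᵥ u) ⬝ᵥ ξ (n - k) ω)) :=
    integrable_finset_sum _ fun k _ =>
      (aux_dot_integrable _ _ (hmeas _) (hL2 _)).const_mul γ
  have hInt4 : Integrable (fun ω =>
      ∑ k ∈ Finset.range n, ∑ l ∈ Finset.range n,
        (γ * γ) * (ξ (n - k) ω ⬝ᵥ ((M ^ k * A * M ^ l) *ᵥ ξ (n - l) ω))) :=
    integrable_finset_sum _ fun k _ => integrable_finset_sum _ fun l _ =>
      (aux_quad_integrable _ _ _ (hmeas _) (hmeas _) (hL2 _) (hL2 _)).const_mul _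
  simp only [hpt]
  have h12 : Integrable (fun ω => u ⬝ᵥ (A *ᵥ u)
      + ∑ k ∈ Finset.range n, γ * ((u ᵥ* (A * M ^ k)) ⬝ᵥ ξ (n - k) ω)) :=
    (integrable_const _).add hInt2
  have h123 : Integrable (fun ω => u ⬝ᵥ (A *ᵥ u)
      + (∑ k ∈ Finset.range n, γ * ((u ᵥ* (A * M ^ k)) ⬝ᵥ ξ (n - k) ω))
      + ∑ k ∈ Finset.range n, γ * (((M ^ k * A) *ᵥ u) ⬝ᵥ ξ (n - k) ω)) :=
    h12.add hInt3
  rw [integral_add h123 hInt4, integral_add h12 hInt3,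
    integral_add (integrable_const (u ⬝ᵥ (A *ᵥ u))) hInt2, integral_const]
  have e2 : (∫ ω, ∑ k ∈ Finset.range n, γ * ((u ᵥ* (A * M ^ k)) ⬝ᵥ ξ (n - k) ω)) = 0 := by
    rw [integral_finset_sum _ fun k _ =>
      (aux_dot_integrable _ _ (hmeas _) (hL2 _)).const_mul γ]
    refine Finset.sum_eq_zero fun k _ => ?_
    rw [integral_const_mul, aux_dot_int _ _ (hmeas _) (hL2 _) (hmean0 _), mul_zero]
  have e3 : (∫ ω, ∑ k ∈ Finset.range n, γ * (((M ^ k * A) *ᵥ u) ⬝ᵥ ξ (n - k) ω)) = 0 := by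
    rw [integral_finset_sum _ fun k _ =>
      (aux_dot_integrable _ _ (hmeas _) (hL2 _)).const_mul γ]
    refine Finset.sum_eq_zero fun k _ => ?_
    rw [integral_const_mul, aux_dot_int _ _ (hmeas _) (hL2 _) (hmean0 _), mul_zero]
  have e4 : (∫ ω, ∑ k ∈ Finset.range n, ∑ l ∈ Finset.range n,
        (γ * γ) * (ξ (n - k) ω ⬝ᵥ ((M ^ k * A * M ^ l) *ᵥ ξ (n - l) ω))) =
      ∑ k ∈ Finset.range n, (γ * γ) * Matrix.trace (M ^ k * A * M ^ k * C) := by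
    rw [integral_finset_sum _ fun k _ => integrable_finset_sum _ fun l _ =>
      (aux_quad_integrable _ _ _ (hmeas _) (hmeas _) (hL2 _) (hL2 _)).const_mul _]
    refine Finset.sum_congr rfl fun k hk => ?_
    rw [integral_finset_sum _ fun l _ =>
      (aux_quad_integrable _ _ _ (hmeas _) (hmeas _) (hL2 _) (hL2 _)).const_mul _]
    rw [Finset.sum_eq_single k]
    · rw [integral_const_mul,
        aux_quad_int _ _ _ (hmeas _) (hmeas _) (hL2 _) (hL2 _)]
      congr 1
      have htr : Matrix.trace (M ^ k * A * M ^ k * C) =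
          ∑ a, ∑ b, (M ^ k * A * M ^ k) a b * C a b := by
        simp only [Matrix.trace, Matrix.diag, Matrix.mul_apply, Finset.sum_mul]
        refine Finset.sum_congr rfl fun a _ => Finset.sum_congr rfl fun b _ => ?_
        rw [hCsymm b a]
      rw [htr]
      refine Finset.sum_congr rfl fun a _ => Finset.sum_congr rfl fun b _ => ?_
      rw [hcov (n - k) a b]
    · intro l hl hlk
      have hne : n - k ≠ n - l := by
        have hk' := Finset.mem_range.mp hk
        have hl' := Finset.mem_range.mp hl
        omega
      rw [integral_const_mul,
        aux_quad_int _ _ _ (hmeas _) (hmeas _) (hL2 _) (hL2 _)]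
      have : ∀ a b, (∫ ω, ξ (n - k) ω a * ξ (n - l) ω b) = 0 := fun a b =>
        aux_indep_prod_int _ _ (hmeas _) (hmeas _) (hL2 _) (hL2 _)
          (hindep.indepFun hne) (hmean0 _) a b
      simp [this]
    · intro hk'; exact absurd hk hk'
  rw [e2, e3, e4]
  -- first term
  have c1 : u ⬝ᵥ (A *ᵥ u) = η0 ⬝ᵥ ((A * M ^ (2 * n)) *ᵥ η0) := by
    have hmm : M ^ n * A * M ^ n = A * M ^ (2 * n) := by
      rw [(hMA.pow_left n).eq, Matrix.mul_assoc, ← pow_add, two_mul]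
    rw [hu, aux_mv, Matrix.transpose_pow, hMt, Matrix.mulVec_mulVec, Matrix.mulVec_mulVec, hmm]
  -- the trace term
  have c2 : ∑ k ∈ Finset.range n, (γ * γ) * Matrix.trace (M ^ k * A * M ^ k * C) =
      γ * Matrix.trace (A * C * (1 - M ^ (2 * n)) * H⁻¹ * V⁻¹) := by
    have hMAk : ∀ k, M ^ k * A * M ^ k = A * (M ^ 2) ^ k := by
      intro k
      rw [(hMA.pow_left k).eq, Matrix.mul_assoc, ← pow_add, ← two_mul, pow_mul]
    set G : Matrix (Fin d) (Fin d) ℝ := 1 - (M ^ 2) ^ n with hG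
    set S : Matrix (Fin d) (Fin d) ℝ := ∑ k ∈ Finset.range n, (M ^ 2) ^ k with hSdef
    have hsum : ∑ k ∈ Finset.range n, (γ * γ) * Matrix.trace (M ^ k * A * M ^ k * C)
        = (γ * γ) * Matrix.trace (A * S * C) := by
      rw [← Finset.mul_sum]
      congr 1
      calc ∑ k ∈ Finset.range n, Matrix.trace (M ^ k * A * M ^ k * C)
          = ∑ k ∈ Finset.range n, Matrix.trace (A * (M ^ 2) ^ k * C) :=
            Finset.sum_congr rfl fun k _ => by rw [hMAk k]
        _ = Matrix.trace (∑ k ∈ Finset.range n, A * (M ^ 2) ^ k * C) :=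
            (Matrix.trace_sum _ _).symm
        _ = Matrix.trace (A * S * C) := by rw [hSdef, Finset.mul_sum, Finset.sum_mul]
    have hgeom : (1 - M ^ 2) * S = G := by
      have h := mul_geom_sum (M ^ 2) n
      calc (1 - M ^ 2) * S = -((M ^ 2 - 1) * S) := by rw [← neg_mul, neg_sub]
        _ = -((M ^ 2) ^ n - 1) := by rw [hSdef, h]
        _ = G := by rw [hG, neg_sub]
    have h1M : (1 : Matrix (Fin d) (Fin d) ℝ) - M ^ 2 = γ • (H * V) := by
      rw [hMdef, hVdef, pow_two]
      simp only [Matrix.mul_sub, Matrix.sub_mul, Matrix.mul_one, Matrix.one_mul,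
        smul_mul_assoc, mul_smul_comm, smul_smul, smul_sub]
      module
    have hWunit : IsUnit (H * V).det := by rw [Matrix.det_mul]; exact hHunit.mul hVunit
    have h1Munit : IsUnit ((1 : Matrix (Fin d) (Fin d) ℝ) - M ^ 2).det := by
      rw [h1M, Matrix.det_smul, Fintype.card_fin]
      exact ((pow_ne_zero d hγne).isUnit).mul hWunit
    have hinv : ((1 : Matrix (Fin d) (Fin d) ℝ) - M ^ 2)⁻¹ = γ⁻¹ • (V⁻¹ * H⁻¹) := by
      apply Matrix.inv_eq_right_inv
      rw [h1M, smul_mul_assoc, mul_smul_comm, smul_smul, mul_inv_cancel₀ hγne, one_smul,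
        Matrix.mul_assoc H V, ← Matrix.mul_assoc V V⁻¹, Matrix.mul_nonsing_inv _ hVunit,
        Matrix.one_mul, Matrix.mul_nonsing_inv _ hHunit]
    have hSval : S = γ⁻¹ • (V⁻¹ * H⁻¹ * G) := by
      have hstep : S = ((1 : Matrix (Fin d) (Fin d) ℝ) - M ^ 2)⁻¹ * G := by
        rw [← hgeom, ← Matrix.mul_assoc, Matrix.nonsing_inv_mul _ h1Munit, Matrix.one_mul]
      rw [hstep, hinv, smul_mul_assoc]
    have hMG : Commute H G := (Commute.one_right H).sub_right ((hHM.pow_right 2).pow_right n)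
    have hVG : Commute V G := (Commute.one_right V).sub_right ((hVM.pow_right 2).pow_right n)
    have hAG : Commute A G :=
      (Commute.one_right A).sub_right ((hMA.symm.pow_right 2).pow_right n)
    have hAHinv : Commute A H⁻¹ := aux_commute_inv A H hHA.symm hHunit
    have hAVinv : Commute A V⁻¹ := aux_commute_inv A V hVA.symm hVunit
    have hGHinv : Commute G H⁻¹ := aux_commute_inv G H hMG.symm hHunit
    have hGVinv : Commute G V⁻¹ := aux_commute_inv G V hVG.symm hVunit
    have hHVinv : Commute H⁻¹ V⁻¹ :=
      aux_commute_inv H⁻¹ V (aux_commute_inv V H hHV.symm hHunit).symm hVunit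
    have hswap : V⁻¹ * H⁻¹ * G = G * H⁻¹ * V⁻¹ := by
      rw [Matrix.mul_assoc, ← hGHinv.eq, ← Matrix.mul_assoc, ← hGVinv.eq,
        Matrix.mul_assoc, ← hHVinv.eq, ← Matrix.mul_assoc]
    have hAY : Commute A (G * H⁻¹ * V⁻¹) := (hAG.mul_right hAHinv).mul_right hAVinv
    rw [hsum, hSval, hswap]
    have hsm : A * (γ⁻¹ • (G * H⁻¹ * V⁻¹)) * C = γ⁻¹ • (A * (G * H⁻¹ * V⁻¹) * C) := by
      rw [mul_smul_comm, smul_mul_assoc]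
    rw [hsm, Matrix.trace_smul, smul_eq_mul]
    have htr2 : Matrix.trace (A * (G * H⁻¹ * V⁻¹) * C) =
        Matrix.trace (A * C * (1 - M ^ (2 * n)) * H⁻¹ * V⁻¹) := by
      have hassoc : A * C * (1 - M ^ (2 * n)) * H⁻¹ * V⁻¹ = (A * C) * (G * H⁻¹ * V⁻¹) := by
        rw [pow_mul, ← hG]
        simp only [Matrix.mul_assoc]
      rw [hassoc, Matrix.trace_mul_comm (A * C) (G * H⁻¹ * V⁻¹),
        ← Matrix.mul_assoc (G * H⁻¹ * V⁻¹) A C, ← hAY.eq]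
    rw [htr2]
    field_simp
  rw [c1, c2]
  simp [measure_univ]
end

section
/- In the quadratic semi-stochastic setting with step size γ ≤ 1/(2L), the stationary second moment satisfies E_{π_γ}[⟨η, P(H)η⟩] = γ tr( C P(H) H^{-1} (2I − γH)^{-1} ) for any polynomial P, where π_γ is the stationary distribution of constant-step SGD. -/
open MeasureTheory ProbabilityTheory Polynomial Matrix

lemma posdef_lower {d : ℕ} (D : Matrix (Fin d) (Fin d) ℝ) (hD : D.PosDef) :
    ∃ c : ℝ, 0 < c ∧ ∀ v : Fin d → ℝ, c * (v ⬝ᵥ v) ≤ v ⬝ᵥ D.mulVec v := by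
  rcases Nat.eq_zero_or_pos d with hd | hd
  · refine ⟨1, one_pos, fun v => ?_⟩
    subst hd
    simp [dotProduct]
  have hcont : Continuous fun v : Fin d → ℝ => v ⬝ᵥ D.mulVec v :=
    (continuous_id.dotProduct (continuous_const.matrix_mulVec continuous_id))
  have hS : IsCompact (Metric.sphere (0 : Fin d → ℝ) 1) := isCompact_sphere _ _
  have hne : (Metric.sphere (0 : Fin d → ℝ) 1).Nonempty := by
    refine ⟨Pi.single ⟨0, hd⟩ 1, ?_⟩
    simp [mem_sphere_iff_norm, Pi.norm_single]
  obtain ⟨v₀, hv₀S, hmin⟩ := hS.exists_isMinOn hne hcont.continuousOn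
  have hv₀ : v₀ ≠ 0 := by
    intro h
    have := mem_sphere_iff_norm.mp hv₀S
    rw [h] at this; simp at this
  have hm : 0 < v₀ ⬝ᵥ D.mulVec v₀ := by
    have := hD.dotProduct_mulVec_pos hv₀
    simpa using this
  set m := v₀ ⬝ᵥ D.mulVec v₀ with hmdef
  refine ⟨m / d, div_pos hm (by exact_mod_cast hd), fun v => ?_⟩
  rcases eq_or_ne v 0 with rfl | hv
  · simp
  · have hnv : (0:ℝ) < ‖v‖ := norm_pos_iff.mpr hv
    set w : Fin d → ℝ := ‖v‖⁻¹ • v with hw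
    have hwS : w ∈ Metric.sphere (0 : Fin d → ℝ) 1 := by
      simp [hw, mem_sphere_iff_norm, norm_smul, abs_of_pos (inv_pos.mpr hnv),
        inv_mul_cancel₀ hnv.ne']
    have hww : w ⬝ᵥ w ≤ (d : ℝ) := by
      have h1 : ∀ i, w i * w i ≤ 1 := by
        intro i
        have : |w i| ≤ 1 := by
          have h := norm_le_pi_norm w i
          have hw1 : ‖w‖ = 1 := by simpa using mem_sphere_iff_norm.mp hwS
          rw [hw1] at h
          simpa using h
        nlinarith [abs_nonneg (w i), sq_abs (w i)]
      calc w ⬝ᵥ w = ∑ i, w i * w i := rfl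
        _ ≤ ∑ _i : Fin d, (1:ℝ) := Finset.sum_le_sum fun i _ => h1 i
        _ = d := by simp
    have hfw : m ≤ w ⬝ᵥ D.mulVec w := hmin hwS
    have hkey : m / d * (w ⬝ᵥ w) ≤ w ⬝ᵥ D.mulVec w := by
      have h2 : m / d * (w ⬝ᵥ w) ≤ m / d * d :=
        mul_le_mul_of_nonneg_left hww (le_of_lt (div_pos hm (by exact_mod_cast hd)))
      have h3 : m / d * d = m := by field_simp
      linarith
    have hvw : v = ‖v‖ • w := by
      rw [hw, smul_smul, mul_inv_cancel₀ hnv.ne', one_smul]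
    rw [hvw]
    have e1 : (‖v‖ • w) ⬝ᵥ (‖v‖ • w) = ‖v‖^2 * (w ⬝ᵥ w) := by
      simp [smul_dotProduct, dotProduct_smul, smul_eq_mul]; ring
    have e2 : (‖v‖ • w) ⬝ᵥ D.mulVec (‖v‖ • w) = ‖v‖^2 * (w ⬝ᵥ D.mulVec w) := by
      rw [mulVec_smul]
      simp [smul_dotProduct, dotProduct_smul, smul_eq_mul]; ring
    rw [e1, e2]
    calc m / d * (‖v‖^2 * (w ⬝ᵥ w)) = ‖v‖^2 * (m / d * (w ⬝ᵥ w)) := by ring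
      _ ≤ ‖v‖^2 * (w ⬝ᵥ D.mulVec w) := mul_le_mul_of_nonneg_left hkey (sq_nonneg _)

lemma sum_entrywise_trace {d : ℕ} (X Y : Matrix (Fin d) (Fin d) ℝ) :
    ∑ a, ∑ b, X a b * Y a b = Matrix.trace (X * Yᵀ) := by
  simp [Matrix.trace, Matrix.mul_apply, Matrix.diag, Matrix.transpose_apply]

lemma entry_BCBT {d : ℕ} (B C : Matrix (Fin d) (Fin d) ℝ) (a b : Fin d) :
    ∑ c, ∑ e, B a c * B b e * C c e = (B * C * Bᵀ) a b := by
  simp only [Matrix.mul_apply, Matrix.transpose_apply, Finset.sum_mul]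
  rw [Finset.sum_comm]
  refine Finset.sum_congr rfl fun e _ => Finset.sum_congr rfl fun c _ => by ring

lemma dot_mulVec_symm {d : ℕ} (S : Matrix (Fin d) (Fin d) ℝ) (hSt : Sᵀ = S)
    (v w : Fin d → ℝ) : (S.mulVec v) ⬝ᵥ w = v ⬝ᵥ S.mulVec w := by
  have h := Matrix.mulVec_transpose S v
  rw [hSt] at h
  rw [Matrix.dotProduct_mulVec, ← h]

/-- **Stationary value of the quadratic form (Lemma, second part).**
In the quadratic semi-stochastic setting with step `γ ≤ 1/(2‖H‖)`, letting
`n → ∞` in the closed-form second moment formula,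
`E_{π_γ}⟨η, P(H)η⟩ = γ tr(C P(H) H⁻¹ (2I − γH)⁻¹)` for any polynomial `P`. -/
theorem stmt6 {d : ℕ} {Ω : Type*} [MeasureSpace Ω]
    [IsProbabilityMeasure (volume : Measure Ω)]
    (H C : Matrix (Fin d) (Fin d) ℝ) (hH : H.PosDef)
    (γ : ℝ) (hγpos : 0 < γ)
    -- `γ ≤ 1/(2L)` with `L = ‖H‖`, i.e. `γ H ≼ ½ I`
    (hγ : ∀ v : Fin d → ℝ, γ * (v ⬝ᵥ H.mulVec v) ≤ (1 / 2) * (v ⬝ᵥ v))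
    (ξ : ℕ → Ω → (Fin d → ℝ)) (η : ℕ → Ω → (Fin d → ℝ)) (η0 : Fin d → ℝ)
    (hmeas : ∀ i, Measurable (ξ i))
    -- i.i.d. noise
    (hindep : iIndepFun ξ volume)
    (hident : ∀ i j, Measure.map (ξ i) volume = Measure.map (ξ j) volume)
    -- zero mean, covariance `C`, square integrable
    (hmean : ∀ i, ∫ ω, ξ i ω = 0)
    (hcov : ∀ i a b, ∫ ω, ξ i ω a * ξ i ω b = C a b)
    (hL2 : ∀ i, Integrable (fun ω => ‖ξ i ω‖ ^ 2))
    -- deterministic initialization and SGD recursion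
    (hη0 : ∀ ω, η 0 ω = η0)
    (hrec : ∀ k ω, η (k + 1) ω = (1 - γ • H).mulVec (η k ω) + γ • ξ (k + 1) ω)
    (P : Polynomial ℝ) :
    Filter.Tendsto (fun n => ∫ ω, (η n ω) ⬝ᵥ ((aeval H P).mulVec (η n ω)))
      Filter.atTop
      (nhds (γ * Matrix.trace
        (C * aeval H P * H⁻¹ *
          ((2 : ℝ) • (1 : Matrix (Fin d) (Fin d) ℝ) - γ • H)⁻¹))) := by
  classical
  set A : Matrix (Fin d) (Fin d) ℝ := 1 - γ • H with hAdef
  set M : Matrix (Fin d) (Fin d) ℝ := aeval H P with hMdef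
  set K : Matrix (Fin d) (Fin d) ℝ := (2 : ℝ) • (1 : Matrix (Fin d) (Fin d) ℝ) - γ • H
    with hKdef
  have hHt : Hᵀ = H := by
    have := hH.1
    rwa [Matrix.IsHermitian, Matrix.conjTranspose_eq_transpose_of_trivial] at this
  have hcommHM : H * M = M * H := by
    have h1 : (aeval H) (X * P) = (aeval H) (P * X) := by rw [mul_comm]
    rw [_root_.map_mul, _root_.map_mul, Polynomial.aeval_X] at h1
    exact h1
  have hAt : Aᵀ = A := by
    rw [hAdef, Matrix.transpose_sub, Matrix.transpose_smul, hHt, Matrix.transpose_one]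
  have hcommAM : A * M = M * A := by
    rw [hAdef]
    simp only [Matrix.sub_mul, Matrix.mul_sub, Matrix.one_mul, Matrix.mul_one,
      Matrix.smul_mul, Matrix.mul_smul, hcommHM]
  -- dot product facts
  have hdotnn : ∀ v : Fin d → ℝ, 0 ≤ v ⬝ᵥ v := fun v =>
    Finset.sum_nonneg fun i _ => mul_self_nonneg (v i)
  have hdotpos : ∀ v : Fin d → ℝ, v ≠ 0 → 0 < v ⬝ᵥ v := by
    intro v hv
    obtain ⟨i, hi⟩ := Function.ne_iff.mp hv
    have h1 : 0 < v i * v i := mul_self_pos.mpr hi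
    have h2 := Finset.single_le_sum (f := fun t => v t * v t)
      (fun t _ => mul_self_nonneg _) (Finset.mem_univ i)
    calc (0:ℝ) < v i * v i := h1
      _ ≤ ∑ t, v t * v t := h2
      _ = v ⬝ᵥ v := rfl
  -- H² bound from the square root of H
  have hsq : ∀ v : Fin d → ℝ, γ * (v ⬝ᵥ (H * H).mulVec v) ≤ (1 / 2) * (v ⬝ᵥ H.mulVec v) := by
    obtain ⟨S, hSt, hSS⟩ : ∃ S : Matrix (Fin d) (Fin d) ℝ, Sᵀ = S ∧ S * S = H := by
      open scoped MatrixOrder in refine ⟨CFC.sqrt H, ?_, CFC.sqrt_mul_sqrt_self H hH.posSemidef.nonneg⟩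
      open scoped MatrixOrder in have := (CFC.sqrt_nonneg H).posSemidef.1
      rwa [Matrix.IsHermitian, Matrix.conjTranspose_eq_transpose_of_trivial] at this
    intro v
    have key := hγ (S.mulVec v)
    have hmat : S * (H * S) = H * H := by rw [← hSS]; simp only [Matrix.mul_assoc]
    have e1 : (S.mulVec v) ⬝ᵥ H.mulVec (S.mulVec v) = v ⬝ᵥ (H * H).mulVec v := by
      rw [Matrix.mulVec_mulVec, dot_mulVec_symm S hSt, Matrix.mulVec_mulVec, hmat]
    have e2 : (S.mulVec v) ⬝ᵥ (S.mulVec v) = v ⬝ᵥ H.mulVec v := by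
      rw [dot_mulVec_symm S hSt, Matrix.mulVec_mulVec, hSS]
    rw [e1, e2] at key
    exact key
  -- D = 1 - A² is positive definite
  have hDeq0 : (1 : Matrix (Fin d) (Fin d) ℝ) - A * A = (2*γ) • H - (γ*γ) • (H * H) := by
    rw [hAdef]
    simp only [Matrix.sub_mul, Matrix.mul_sub, Matrix.one_mul, Matrix.mul_one,
      Matrix.smul_mul, Matrix.mul_smul, smul_smul]
    module
  set D : Matrix (Fin d) (Fin d) ℝ := 1 - A * A with hDdef
  have hDquad : ∀ v : Fin d → ℝ, v ⬝ᵥ D.mulVec v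
      = 2*γ * (v ⬝ᵥ H.mulVec v) - γ*γ*(v ⬝ᵥ (H*H).mulVec v) := by
    intro v
    rw [hDeq0]
    simp [Matrix.sub_mulVec, Matrix.smul_mulVec, dotProduct_sub, dotProduct_smul,
      smul_eq_mul]
    try ring
  have hDt : Dᵀ = D := by
    rw [hDdef, Matrix.transpose_sub, Matrix.transpose_one, Matrix.transpose_mul, hAt]
  have hDpos : D.PosDef := by
    refine Matrix.PosDef.of_dotProduct_mulVec_pos ?_ ?_
    · rw [Matrix.IsHermitian, Matrix.conjTranspose_eq_transpose_of_trivial, hDt]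
    · intro v hv
      have h1 := hsq v
      have h2 : 0 < v ⬝ᵥ H.mulVec v := by
        have := hH.dotProduct_mulVec_pos hv
        simpa using this
      have : 0 < v ⬝ᵥ D.mulVec v := by
        rw [hDquad v]; nlinarith
      simpa using this
  obtain ⟨c, hc, hcle⟩ := posdef_lower D hDpos
  set c' : ℝ := min c 1 with hc'def
  have hc'pos : 0 < c' := lt_min hc one_pos
  set r : ℝ := 1 - c' with hrdef
  have hr0 : 0 ≤ r := by
    have : c' ≤ 1 := min_le_right _ _
    simp only [hrdef]; linarith
  have hr1 : r < 1 := by simp only [hrdef]; linarith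
  -- contraction bound
  have hAbound : ∀ v : Fin d → ℝ, (A.mulVec v) ⬝ᵥ (A.mulVec v) ≤ r * (v ⬝ᵥ v) := by
    intro v
    have e1 : (A.mulVec v) ⬝ᵥ (A.mulVec v) = v ⬝ᵥ (A*A).mulVec v := by
      rw [dot_mulVec_symm A hAt, Matrix.mulVec_mulVec]
    rw [e1, show A*A = 1 - D from by rw [hDdef, sub_sub_cancel],
      Matrix.sub_mulVec, dotProduct_sub, Matrix.one_mulVec]
    have h3 : c' * (v ⬝ᵥ v) ≤ v ⬝ᵥ D.mulVec v :=
      le_trans (mul_le_mul_of_nonneg_right (min_le_left c 1) (hdotnn v)) (hcle v)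
    rw [hrdef, sub_mul, one_mul]
    linarith
  have hpow : ∀ (n : ℕ) (v : Fin d → ℝ),
      ((A^n).mulVec v) ⬝ᵥ ((A^n).mulVec v) ≤ r^n * (v ⬝ᵥ v) := by
    intro n
    induction n with
    | zero => intro v; simp [Matrix.one_mulVec]
    | succ n ih =>
      intro v
      have h1 : (A^(n+1)).mulVec v = (A^n).mulVec (A.mulVec v) := by
        rw [pow_succ, ← Matrix.mulVec_mulVec]
      rw [h1]
      calc ((A^n).mulVec (A.mulVec v)) ⬝ᵥ ((A^n).mulVec (A.mulVec v))
          ≤ r^n * ((A.mulVec v) ⬝ᵥ (A.mulVec v)) := ih _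
        _ ≤ r^n * (r * (v ⬝ᵥ v)) :=
            mul_le_mul_of_nonneg_left (hAbound v) (pow_nonneg hr0 n)
        _ = r^(n+1) * (v ⬝ᵥ v) := by ring
  -- powers of A tend to zero
  have htendA : Filter.Tendsto (fun n => A ^ n) Filter.atTop (nhds 0) := by
    have hs0 : 0 ≤ Real.sqrt r := Real.sqrt_nonneg r
    have hs1 : Real.sqrt r < 1 := by
      rw [show (1:ℝ) = Real.sqrt 1 from Real.sqrt_one.symm]
      exact Real.sqrt_lt_sqrt hr0 hr1
    have hgeo : Filter.Tendsto (fun n => (Real.sqrt r)^n) Filter.atTop (nhds 0) :=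
      tendsto_pow_atTop_nhds_zero_of_lt_one hs0 hs1
    rw [show (0 : Matrix (Fin d) (Fin d) ℝ) = fun _ _ => (0:ℝ) from rfl]
    refine tendsto_pi_nhds.mpr fun i => tendsto_pi_nhds.mpr fun j => ?_
    refine squeeze_zero_norm (fun n => ?_) hgeo
    have h1 : (A ^ n) i j = ((A ^ n).mulVec (Pi.single j 1)) i := by
      simp [Matrix.mulVec_single]
    have h3 : (Pi.single j 1 : Fin d → ℝ) ⬝ᵥ Pi.single j 1 = 1 := by
      simp [dotProduct, Pi.single_apply]
    have h2 := hpow n (Pi.single j 1)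
    rw [h3, mul_one] at h2
    set w := (A^n).mulVec (Pi.single j 1) with hw
    have h4 : (w i)^2 ≤ w ⬝ᵥ w := by
      have he : w ⬝ᵥ w = ∑ t, w t * w t := rfl
      have hle := Finset.single_le_sum (f := fun t => w t * w t)
        (fun t _ => mul_self_nonneg _) (Finset.mem_univ i)
      have hle' : w i * w i ≤ ∑ t, w t * w t := by simpa using hle
      rw [he]; nlinarith
    have h5 : |w i| ≤ Real.sqrt (r^n) := by
      rw [← Real.sqrt_sq_eq_abs]
      exact Real.sqrt_le_sqrt (by linarith)
    rw [Real.norm_eq_abs, h1]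
    calc |w i| ≤ Real.sqrt (r^n) := h5
      _ = (Real.sqrt r)^n := by
          have hrn : r^n = ((Real.sqrt r)^n)^2 := by
            rw [← pow_mul, mul_comm, pow_mul, Real.sq_sqrt hr0]
          rw [hrn, Real.sqrt_sq (pow_nonneg hs0 n)]
  -- invertibility facts
  have hHdet : IsUnit H.det := isUnit_iff_ne_zero.mpr (ne_of_gt hH.det_pos)
  have hKpos : K.PosDef := by
    refine Matrix.PosDef.of_dotProduct_mulVec_pos ?_ ?_
    · have hKt : Kᵀ = K := by
        rw [hKdef, Matrix.transpose_sub, Matrix.transpose_smul, Matrix.transpose_smul,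
          hHt, Matrix.transpose_one]
      rw [Matrix.IsHermitian, Matrix.conjTranspose_eq_transpose_of_trivial, hKt]
    · intro v hv
      have h1 := hγ v
      have hvv := hdotpos v hv
      have hq : v ⬝ᵥ K.mulVec v = 2*(v ⬝ᵥ v) - γ*(v ⬝ᵥ H.mulVec v) := by
        rw [hKdef]
        simp [Matrix.sub_mulVec, Matrix.smul_mulVec, Matrix.one_mulVec,
          dotProduct_sub, dotProduct_smul, smul_eq_mul]
        try ring
      have : 0 < v ⬝ᵥ K.mulVec v := by rw [hq]; nlinarith
      simpa using this
  have hKdet : IsUnit K.det := isUnit_iff_ne_zero.mpr (ne_of_gt hKpos.det_pos)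
  have hDdet : IsUnit D.det := isUnit_iff_ne_zero.mpr (ne_of_gt hDpos.det_pos)
  set G : Matrix (Fin d) (Fin d) ℝ := D⁻¹ with hGdef
  have hGeq : G = γ⁻¹ • (K⁻¹ * H⁻¹) := by
    have hDK : D = (γ • H) * K := by
      rw [hDeq0, hKdef]
      simp only [Matrix.mul_sub, Matrix.smul_mul, Matrix.mul_smul, smul_smul,
        Matrix.mul_one]
    rw [hGdef]
    refine Matrix.inv_eq_right_inv ?_
    rw [hDK]
    calc (γ • H) * K * (γ⁻¹ • (K⁻¹ * H⁻¹)) = (γ⁻¹ * γ) • (H * (K * (K⁻¹ * H⁻¹))) := by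
          simp only [Matrix.smul_mul, Matrix.mul_smul, smul_smul, Matrix.mul_assoc]
      _ = 1 := by
          rw [← Matrix.mul_assoc K, Matrix.mul_nonsing_inv _ hKdet, Matrix.one_mul,
            inv_mul_cancel₀ hγpos.ne', Matrix.mul_nonsing_inv _ hHdet, one_smul]
  have hHK : H * K = K * H := by
    rw [hKdef]
    simp only [Matrix.mul_sub, Matrix.sub_mul, Matrix.mul_smul, Matrix.smul_mul,
      Matrix.mul_one, Matrix.one_mul]
  have hKHinv : K⁻¹ * H⁻¹ = H⁻¹ * K⁻¹ := by
    rw [← Matrix.mul_inv_rev H K, ← Matrix.mul_inv_rev K H, hHK]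
  -- probabilistic preliminaries
  have measξ : ∀ (i : ℕ) (a : Fin d), Measurable fun ω => ξ i ω a :=
    fun i a => (measurable_pi_apply a).comp (hmeas i)
  have intξ2 : ∀ (i j : ℕ) (a b : Fin d),
      Integrable (fun ω => ξ i ω a * ξ j ω b) := by
    intro i j a b
    have hm : AEStronglyMeasurable (fun ω => ξ i ω a * ξ j ω b) volume :=
      ((measξ i a).mul (measξ j b)).aestronglyMeasurable
    have hg : Integrable (fun ω => (‖ξ i ω‖^2 + ‖ξ j ω‖^2) / 2) :=
      ((hL2 i).add (hL2 j)).div_const 2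
    refine hg.mono' hm (Filter.Eventually.of_forall fun ω => ?_)
    have h1 : |ξ i ω a| ≤ ‖ξ i ω‖ := by
      simpa using norm_le_pi_norm (ξ i ω) a
    have h2 : |ξ j ω b| ≤ ‖ξ j ω‖ := by
      simpa using norm_le_pi_norm (ξ j ω) b
    have h3 : ‖ξ i ω a * ξ j ω b‖ = |ξ i ω a| * |ξ j ω b| := by
      rw [Real.norm_eq_abs, abs_mul]
    rw [h3]
    nlinarith [abs_nonneg (ξ i ω a), abs_nonneg (ξ j ω b), norm_nonneg (ξ i ω),
      norm_nonneg (ξ j ω), sq_nonneg (‖ξ i ω‖ - ‖ξ j ω‖),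
      mul_le_mul h1 h2 (abs_nonneg _) (norm_nonneg _)]
  have intξ1 : ∀ (i : ℕ) (a : Fin d), Integrable (fun ω => ξ i ω a) := by
    intro i a
    have hm : AEStronglyMeasurable (fun ω => ξ i ω a) volume :=
      (measξ i a).aestronglyMeasurable
    have hg : Integrable (fun ω => (1 + ‖ξ i ω‖^2) / 2) :=
      ((integrable_const 1).add (hL2 i)).div_const 2
    refine hg.mono' hm (Filter.Eventually.of_forall fun ω => ?_)
    have h1 : |ξ i ω a| ≤ ‖ξ i ω‖ := by simpa using norm_le_pi_norm (ξ i ω) a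
    rw [Real.norm_eq_abs]
    nlinarith [abs_nonneg (ξ i ω a), norm_nonneg (ξ i ω), sq_nonneg (‖ξ i ω‖ - 1)]
  have meanξ : ∀ (i : ℕ) (a : Fin d), ∫ ω, ξ i ω a = 0 := by
    intro i a
    have hintvec : Integrable (ξ i) := by
      have hmm : AEStronglyMeasurable (ξ i) volume := (hmeas i).aestronglyMeasurable
      exact ((memLp_two_iff_integrable_sq_norm hmm).mpr (hL2 i)).integrable one_le_two
    have h := (ContinuousLinearMap.proj (R := ℝ) (φ := fun _ : Fin d => ℝ)
      a).integral_comp_comm hintvec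
    simp only [ContinuousLinearMap.proj_apply] at h
    rw [h, hmean i]
    rfl
  have covξ : ∀ (i j : ℕ) (a b : Fin d),
      ∫ ω, ξ i ω a * ξ j ω b = if i = j then C a b else 0 := by
    intro i j a b
    split
    · next h => subst h; exact hcov i a b
    · next h =>
      have hind : IndepFun (fun ω => ξ i ω a) (fun ω => ξ j ω b) volume :=
        (hindep.indepFun h).comp (measurable_pi_apply a) (measurable_pi_apply b)
      calc ∫ ω, ξ i ω a * ξ j ω b
          = ∫ ω, ((fun ω => ξ i ω a) * fun ω => ξ j ω b) ω := rfl
        _ = (∫ ω, ξ i ω a) * ∫ ω, ξ j ω b :=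
            hind.integral_mul_eq_mul_integral (intξ1 i a).aestronglyMeasurable
                (intξ1 j b).aestronglyMeasurable
        _ = 0 := by rw [meanξ i a, zero_mul]
  have hCt : Cᵀ = C := by
    ext a b
    rw [Matrix.transpose_apply, ← hcov 0 a b, ← hcov 0 b a]
    congr 1; funext ω; ring
  -- closed form for the iterates
  have hclosed : ∀ (n : ℕ) (ω : Ω), η n ω =
      (A^n).mulVec η0 + ∑ k ∈ Finset.range n, (γ • A^k).mulVec (ξ (n-k) ω) := by
    intro n
    induction n with
    | zero => intro ω; simp [hη0 ω]
    | succ n ih =>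
      intro ω
      rw [hrec n ω, ih ω, Matrix.mulVec_add, Finset.sum_range_succ']
      have p1 : A.mulVec ((A^n).mulVec η0) = (A^(n+1)).mulVec η0 := by
        rw [Matrix.mulVec_mulVec, ← pow_succ']
      have p2 : A.mulVec (∑ k ∈ Finset.range n, (γ • A^k).mulVec (ξ (n-k) ω))
          = ∑ k ∈ Finset.range n, (γ • A^(k+1)).mulVec (ξ (n+1-(k+1)) ω) := by
        have := map_sum (Matrix.mulVecLin A)
          (fun k => (γ • A^k).mulVec (ξ (n-k) ω)) (Finset.range n)
        simp only [Matrix.mulVecLin_apply] at this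
        rw [this]
        refine Finset.sum_congr rfl fun k hk => ?_
        rw [Matrix.mulVec_mulVec, Nat.succ_sub_succ, mul_smul_comm, ← pow_succ']
      have p3 : (γ • A^0).mulVec (ξ (n+1-0) ω) = γ • ξ (n+1) ω := by
        simp [Matrix.smul_mulVec, Matrix.one_mulVec]
      rw [p1, p2, p3]
      abel
  -- second moments
  have hmomint : ∀ (n : ℕ) (a b : Fin d),
      (∫ ω, η n ω a * η n ω b =
        ((A^n).mulVec η0) a * ((A^n).mulVec η0) b
        + ∑ k ∈ Finset.range n, ((γ • A^k) * C * (γ • A^k)ᵀ) a b)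
      ∧ Integrable (fun ω => η n ω a * η n ω b) := by
    intro n a b
    set B : ℕ → Matrix (Fin d) (Fin d) ℝ := fun k => γ • A^k with hB
    set u : Fin d → ℝ := (A^n).mulVec η0 with hu
    have hηeq : ∀ ω, η n ω = u + ∑ k ∈ Finset.range n, (B k).mulVec (ξ (n-k) ω) :=
      fun ω => hclosed n ω
    have happ : ∀ (ω : Ω) (c : Fin d),
        (u + ∑ k ∈ Finset.range n, (B k).mulVec (ξ (n-k) ω)) c
        = u c + ∑ k ∈ Finset.range n, ∑ e, (B k) c e * ξ (n-k) ω e := by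
      intro ω c
      simp only [Pi.add_apply, Finset.sum_apply]
      try rfl
      try (congr 1; refine Finset.sum_congr rfl fun k _ => ?_; rfl)
    set g2 : Ω → ℝ := fun ω => ∑ k ∈ Finset.range n, ∑ c, (B k) a c * u b * ξ (n-k) ω c
      with hg2
    set g3 : Ω → ℝ := fun ω => ∑ l ∈ Finset.range n, ∑ e, u a * (B l) b e * ξ (n-l) ω e
      with hg3
    set g4 : Ω → ℝ := fun ω => ∑ k ∈ Finset.range n, ∑ l ∈ Finset.range n, ∑ c, ∑ e,
        (B k) a c * (B l) b e * (ξ (n-k) ω c * ξ (n-l) ω e) with hg4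
    have hexp : ∀ ω, η n ω a * η n ω b = u a * u b + g2 ω + g3 ω + g4 ω := by
      intro ω
      rw [hηeq ω, happ ω a, happ ω b]
      set S : ℝ := ∑ k ∈ Finset.range n, ∑ e, (B k) a e * ξ (n-k) ω e with hSdef
      set T : ℝ := ∑ l ∈ Finset.range n, ∑ e, (B l) b e * ξ (n-l) ω e with hTdef
      have e2 : S * u b = g2 ω := by
        rw [hSdef, Finset.sum_mul]
        refine Finset.sum_congr rfl fun k _ => ?_
        rw [Finset.sum_mul]
        exact Finset.sum_congr rfl fun c _ => by ring
      have e3 : u a * T = g3 ω := by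
        rw [hTdef, Finset.mul_sum]
        refine Finset.sum_congr rfl fun l _ => ?_
        rw [Finset.mul_sum]
        exact Finset.sum_congr rfl fun e _ => by ring
      have e4 : S * T = g4 ω := by
        rw [hSdef, hTdef, Finset.sum_mul_sum]
        refine Finset.sum_congr rfl fun k _ => Finset.sum_congr rfl fun l _ => ?_
        rw [Finset.sum_mul_sum]
        exact Finset.sum_congr rfl fun c _ => Finset.sum_congr rfl fun e _ => by ring
      calc (u a + S) * (u b + T) = u a * u b + S * u b + u a * T + S * T := by ring
        _ = u a * u b + g2 ω + g3 ω + g4 ω := by rw [e2, e3, e4]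
    have I2 : Integrable g2 := by
      refine integrable_finset_sum _ fun k _ => integrable_finset_sum _ fun c _ => ?_
      exact (intξ1 (n-k) c).const_mul _
    have I3 : Integrable g3 := by
      refine integrable_finset_sum _ fun l _ => integrable_finset_sum _ fun e _ => ?_
      exact (intξ1 (n-l) e).const_mul _
    have I4 : Integrable g4 := by
      refine integrable_finset_sum _ fun k _ => integrable_finset_sum _ fun l _ =>
        integrable_finset_sum _ fun c _ => integrable_finset_sum _ fun e _ => ?_
      exact (intξ2 (n-k) (n-l) c e).const_mul _
    have I1 : Integrable (fun _ : Ω => u a * u b) := integrable_const _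
    have Itot : Integrable (fun ω => η n ω a * η n ω b) := by
      refine (((I1.add I2).add I3).add I4).congr
        (Filter.Eventually.of_forall fun ω => ?_)
      exact (hexp ω).symm
    have IA : Integrable (fun ω => u a * u b + g2 ω) := I1.add I2
    have IB : Integrable (fun ω => u a * u b + g2 ω + g3 ω) := IA.add I3
    have htot : ∫ ω, (u a * u b + g2 ω + g3 ω + g4 ω)
        = (((∫ _ : Ω, u a * u b) + ∫ ω, g2 ω) + ∫ ω, g3 ω) + ∫ ω, g4 ω := by
      have h1 : ∫ ω, (u a * u b + g2 ω) = (∫ _ : Ω, u a * u b) + ∫ ω, g2 ω :=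
        integral_add I1 I2
      have h2 : ∫ ω, (u a * u b + g2 ω + g3 ω)
          = (∫ ω, (u a * u b + g2 ω)) + ∫ ω, g3 ω := integral_add IA I3
      have h3 : ∫ ω, (u a * u b + g2 ω + g3 ω + g4 ω)
          = (∫ ω, (u a * u b + g2 ω + g3 ω)) + ∫ ω, g4 ω := integral_add IB I4
      rw [h3, h2, h1]
    refine ⟨?_, Itot⟩
    rw [integral_congr_ae (Filter.Eventually.of_forall hexp), htot]
    have E1 : ∫ _ : Ω, u a * u b = u a * u b := by simp
    have E2 : ∫ ω, g2 ω = 0 := by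
      rw [hg2, integral_finset_sum _ fun k _ => integrable_finset_sum _ fun c _ =>
        (intξ1 (n-k) c).const_mul _]
      refine Finset.sum_eq_zero fun k _ => ?_
      rw [integral_finset_sum _ fun c _ => (intξ1 (n-k) c).const_mul _]
      refine Finset.sum_eq_zero fun c _ => ?_
      rw [integral_const_mul _ _, meanξ, mul_zero]
    have E3 : ∫ ω, g3 ω = 0 := by
      rw [hg3, integral_finset_sum _ fun l _ => integrable_finset_sum _ fun e _ =>
        (intξ1 (n-l) e).const_mul _]
      refine Finset.sum_eq_zero fun l _ => ?_
      rw [integral_finset_sum _ fun e _ => (intξ1 (n-l) e).const_mul _]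
      refine Finset.sum_eq_zero fun e _ => ?_
      rw [integral_const_mul _ _, meanξ, mul_zero]
    have E4 : ∫ ω, g4 ω = ∑ k ∈ Finset.range n, ((B k) * C * (B k)ᵀ) a b := by
      rw [hg4, integral_finset_sum _ fun k _ => integrable_finset_sum _ fun l _ =>
        integrable_finset_sum _ fun c _ => integrable_finset_sum _ fun e _ =>
        (intξ2 (n-k) (n-l) c e).const_mul _]
      refine Finset.sum_congr rfl fun k hk => ?_
      rw [integral_finset_sum _ fun l _ => integrable_finset_sum _ fun c _ =>
        integrable_finset_sum _ fun e _ => (intξ2 (n-k) (n-l) c e).const_mul _]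
      have hterm : ∀ l ∈ Finset.range n,
          (∫ ω, ∑ c, ∑ e, (B k) a c * (B l) b e * (ξ (n-k) ω c * ξ (n-l) ω e))
          = if l = k then ((B k) * C * (B k)ᵀ) a b else 0 := by
        intro l hl
        rw [integral_finset_sum _ fun c _ => integrable_finset_sum _ fun e _ =>
          (intξ2 (n-k) (n-l) c e).const_mul _]
        have hsum : ∀ c, (∫ ω, ∑ e, (B k) a c * (B l) b e * (ξ (n-k) ω c * ξ (n-l) ω e))
            = ∑ e, (B k) a c * (B l) b e * (if n-k = n-l then C c e else 0) := by
          intro c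
          rw [integral_finset_sum _ fun e _ => (intξ2 (n-k) (n-l) c e).const_mul _]
          exact Finset.sum_congr rfl fun e _ => by rw [integral_const_mul _ _, covξ]
        by_cases hlk : l = k
        · subst hlk
          rw [if_pos rfl, Finset.sum_congr rfl fun c _ => hsum c]
          simp only [if_pos rfl]
          exact entry_BCBT (B l) C a b
        · rw [if_neg hlk]
          have hne : ¬ (n - k = n - l) := by
            simp only [Finset.mem_range] at hk hl
            omega
          rw [Finset.sum_congr rfl fun c _ => hsum c]
          simp only [if_neg hne, mul_zero]
          simp
      rw [Finset.sum_congr rfl hterm, Finset.sum_ite_eq' (Finset.range n) k, if_pos hk]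
    rw [E1, E2, E3, E4, add_zero, add_zero]
  -- the value of the integral as a function of A^n
  have hval : ∀ n : ℕ, ∫ ω, (η n ω) ⬝ᵥ (M.mulVec (η n ω)) =
      ((A^n).mulVec η0) ⬝ᵥ (M.mulVec ((A^n).mulVec η0))
      + γ^2 * Matrix.trace (M * ((1 - (A^n) * (A^n)) * G) * C) := by
    intro n
    set u : Fin d → ℝ := (A^n).mulVec η0 with hu
    have hquad : ∀ v : Fin d → ℝ, v ⬝ᵥ M.mulVec v = ∑ a, ∑ b, M a b * (v a * v b) := by
      intro v
      calc v ⬝ᵥ M.mulVec v = ∑ a, v a * ∑ b, M a b * v b := rfl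
        _ = ∑ a, ∑ b, M a b * (v a * v b) := by
            refine Finset.sum_congr rfl fun a _ => ?_
            rw [Finset.mul_sum]
            exact Finset.sum_congr rfl fun b _ => by ring
    have hpt : ∀ ω, η n ω ⬝ᵥ M.mulVec (η n ω)
        = ∑ a, ∑ b, M a b * (η n ω a * η n ω b) := fun ω => hquad _
    rw [integral_congr_ae (Filter.Eventually.of_forall hpt)]
    rw [integral_finset_sum Finset.univ fun a _ => integrable_finset_sum Finset.univ fun b _ =>
      ((hmomint n a b).2).const_mul (M a b)]
    have hia : ∀ a, ∫ ω, ∑ b, M a b * (η n ω a * η n ω b)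
        = ∑ b, M a b * (u a * u b + ∑ k ∈ Finset.range n,
            ((γ • A^k) * C * (γ • A^k)ᵀ) a b) := by
      intro a
      rw [integral_finset_sum _ fun b _ => ((hmomint n a b).2).const_mul _]
      exact Finset.sum_congr rfl fun b _ => by
        rw [integral_const_mul _ _, (hmomint n a b).1]
    rw [Finset.sum_congr rfl fun a _ => hia a]
    have hsplit : ∑ a, ∑ b, M a b * (u a * u b + ∑ k ∈ Finset.range n,
          ((γ • A^k) * C * (γ • A^k)ᵀ) a b)
        = (∑ a, ∑ b, M a b * (u a * u b))
          + ∑ a, ∑ b, ∑ k ∈ Finset.range n, M a b * ((γ • A^k) * C * (γ • A^k)ᵀ) a b := by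
      rw [← Finset.sum_add_distrib]
      refine Finset.sum_congr rfl fun a _ => ?_
      rw [← Finset.sum_add_distrib]
      refine Finset.sum_congr rfl fun b _ => ?_
      rw [mul_add, Finset.mul_sum]
    rw [hsplit, ← hquad u]
    congr 1
    have hsw : ∑ a, ∑ b, ∑ k ∈ Finset.range n, M a b * ((γ • A^k) * C * (γ • A^k)ᵀ) a b
        = ∑ k ∈ Finset.range n, ∑ a, ∑ b, M a b * ((γ • A^k) * C * (γ • A^k)ᵀ) a b := by
      rw [show (∑ a, ∑ b, ∑ k ∈ Finset.range n, M a b * ((γ • A^k) * C * (γ • A^k)ᵀ) a b)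
          = ∑ a, ∑ k ∈ Finset.range n, ∑ b, M a b * ((γ • A^k) * C * (γ • A^k)ᵀ) a b from
        Finset.sum_congr rfl fun a _ => Finset.sum_comm]
      exact Finset.sum_comm
    rw [hsw]
    have hterm : ∀ k, ∑ a, ∑ b, M a b * ((γ • A^k) * C * (γ • A^k)ᵀ) a b
        = γ^2 * Matrix.trace (M * (A*A)^k * C) := by
      intro k
      have hBt : ((γ • A^k) * C * (γ • A^k)ᵀ)ᵀ = (γ • A^k) * C * (γ • A^k)ᵀ := by
        rw [Matrix.transpose_mul, Matrix.transpose_mul, Matrix.transpose_transpose, hCt,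
          Matrix.mul_assoc]
      rw [sum_entrywise_trace, hBt]
      have hsm : M * ((γ • A^k) * C * (γ • A^k)ᵀ) = (γ^2) • (M * (A^k * (C * A^k))) := by
        simp only [Matrix.transpose_smul, Matrix.transpose_pow, hAt, Matrix.smul_mul,
          Matrix.mul_smul, smul_smul, Matrix.mul_assoc]
        rw [show γ^2 = γ * γ from sq γ]
      rw [hsm, Matrix.trace_smul, smul_eq_mul]
      congr 1
      have hAkM : A^k * M = M * A^k := ((show Commute A M from hcommAM).pow_left k).eq
      calc Matrix.trace (M * (A^k * (C * A^k)))
          = Matrix.trace ((M * A^k * C) * A^k) := by simp only [Matrix.mul_assoc]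
        _ = Matrix.trace (A^k * (M * A^k * C)) := Matrix.trace_mul_comm _ _
        _ = Matrix.trace (((A^k * M) * A^k) * C) := by simp only [Matrix.mul_assoc]
        _ = Matrix.trace (((M * A^k) * A^k) * C) := by rw [hAkM]
        _ = Matrix.trace (M * (A*A)^k * C) := by
            rw [(Commute.refl A).mul_pow]
            simp only [Matrix.mul_assoc]
    rw [Finset.sum_congr rfl fun k _ => hterm k, ← Finset.mul_sum]
    congr 1
    rw [← Matrix.trace_sum]
    congr 1
    have hgeom : ∑ k ∈ Finset.range n, (A*A)^k = (1 - A^n * A^n) * G := by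
      have h := geom_sum_mul (A*A) n
      have h2 : (∑ k ∈ Finset.range n, (A*A)^k) * (1 - A*A) = 1 - (A*A)^n := by
        have h3 : (∑ k ∈ Finset.range n, (A*A)^k) * (1 - A*A)
            = -((∑ k ∈ Finset.range n, (A*A)^k) * ((A*A) - 1)) := by
          rw [← mul_neg, neg_sub]
        rw [h3, h, neg_sub]
      have h4 : (A*A)^n = A^n * A^n := (Commute.refl A).mul_pow n
      calc ∑ k ∈ Finset.range n, (A*A)^k
          = (∑ k ∈ Finset.range n, (A*A)^k) * ((1 - A*A) * (1 - A*A)⁻¹) := by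
            rw [Matrix.mul_nonsing_inv _ hDdet, mul_one]
        _ = ((∑ k ∈ Finset.range n, (A*A)^k) * (1 - A*A)) * (1 - A*A)⁻¹ := by
            rw [mul_assoc]
        _ = (1 - A^n * A^n) * G := by rw [h2, hGdef, h4]
    rw [show (1 - A^n*A^n) * G = ∑ k ∈ Finset.range n, (A*A)^k from hgeom.symm,
      Finset.mul_sum, Finset.sum_mul]
  -- continuity and limit
  have hΦcont : Continuous (fun X : Matrix (Fin d) (Fin d) ℝ =>
      (X.mulVec η0) ⬝ᵥ (M.mulVec (X.mulVec η0))
      + γ^2 * Matrix.trace (M * ((1 - X * X) * G) * C)) := by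
    have h1 : Continuous fun X : Matrix (Fin d) (Fin d) ℝ => X.mulVec η0 :=
      continuous_id.matrix_mulVec continuous_const
    exact ((h1.dotProduct (continuous_const.matrix_mulVec h1))).add
      (continuous_const.mul
        (((continuous_const.matrix_mul
            (((continuous_const.sub (continuous_id.matrix_mul continuous_id)).matrix_mul
              continuous_const))).matrix_mul continuous_const).matrix_trace))
  have hlim : Filter.Tendsto (fun n => ∫ ω, (η n ω) ⬝ᵥ (M.mulVec (η n ω)))
      Filter.atTop (nhds (γ^2 * Matrix.trace (M * G * C))) := by
    have h2 := (hΦcont.tendsto 0).comp htendA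
    have h3 : ((0 : Matrix (Fin d) (Fin d) ℝ).mulVec η0) ⬝ᵥ
        (M.mulVec ((0 : Matrix (Fin d) (Fin d) ℝ).mulVec η0))
        + γ^2 * Matrix.trace (M * ((1 - (0:Matrix (Fin d) (Fin d) ℝ) * 0) * G) * C)
        = γ^2 * Matrix.trace (M * G * C) := by
      simp [Matrix.zero_mulVec, dotProduct_zero]
    rw [h3] at h2
    refine h2.congr fun n => ?_
    simp only [Function.comp_apply]
    exact (hval n).symm
  -- identify the limit with the target
  have hfinal : γ^2 * Matrix.trace (M * G * C) = γ * Matrix.trace (C * M * H⁻¹ * K⁻¹) := by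
    rw [hGeq]
    have e1 : M * (γ⁻¹ • (K⁻¹ * H⁻¹)) * C = γ⁻¹ • (M * (K⁻¹ * H⁻¹) * C) := by
      rw [Matrix.mul_smul, Matrix.smul_mul]
    rw [e1, Matrix.trace_smul, smul_eq_mul]
    have e2 : Matrix.trace (M * (K⁻¹ * H⁻¹) * C) = Matrix.trace (C * M * H⁻¹ * K⁻¹) := by
      rw [Matrix.trace_mul_comm]
      congr 1
      rw [hKHinv]
      simp only [Matrix.mul_assoc]
    rw [e2]
    field_simp
  rw [show (γ * Matrix.trace (C * M * H⁻¹ * K⁻¹)) =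
    γ^2 * Matrix.trace (M * G * C) from hfinal.symm]
  exact hlim
end

section
/- Let c > 0, let χ be a real random variable satisfying P(χ ≥ x) = P(χ ≤ −x) for all x ≥ 0, and let R be any real random variable on the same probability space. Then ½ P(χ² ≥ c²) − P(R² ≥ c²) ≤ P(χ ≤ R) ≤ 1 − ½ P(χ² ≥ c²) + P(R² ≥ c²). -/
open MeasureTheory

/-- **Lemma (probability bounds via the symmetric noise component).**
If `χ` is symmetric (`P(χ ≥ x) = P(χ ≤ −x)` for all `x ≥ 0`) and `R` is any
real random variable on the same space, then for any `c > 0`,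
`½P(χ² ≥ c²) − P(R² ≥ c²) ≤ P(χ ≤ R) ≤ 1 − ½P(χ² ≥ c²) + P(R² ≥ c²)`. -/
theorem stmt9 {Ω : Type*} [MeasureSpace Ω]
    [IsProbabilityMeasure (volume : Measure Ω)]
    (χ R : Ω → ℝ) (hχ : Measurable χ) (hR : Measurable R)
    (c : ℝ) (hc : 0 < c)
    (hsym : ∀ x : ℝ, 0 ≤ x →
      volume {ω | x ≤ χ ω} = volume {ω | χ ω ≤ -x}) :
    (1 / 2) * (volume {ω | c ^ 2 ≤ (χ ω) ^ 2}).toReal -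
        (volume {ω | c ^ 2 ≤ (R ω) ^ 2}).toReal ≤
      (volume {ω | χ ω ≤ R ω}).toReal ∧
    (volume {ω | χ ω ≤ R ω}).toReal ≤
      1 - (1 / 2) * (volume {ω | c ^ 2 ≤ (χ ω) ^ 2}).toReal +
        (volume {ω | c ^ 2 ≤ (R ω) ^ 2}).toReal := by
  set μ := (volume : Measure Ω)
  have hsχR : MeasurableSet {ω | χ ω ≤ R ω} := measurableSet_le hχ hR
  have hsymc := hsym c hc.le
  -- subset facts
  have hA : {ω | c ^ 2 ≤ (χ ω) ^ 2} ⊆ {ω | c ≤ χ ω} ∪ {ω | χ ω ≤ -c} := by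
    intro ω h
    simp only [Set.mem_setOf_eq] at h
    rcases le_or_gt c (χ ω) with h1 | h1
    · exact Or.inl h1
    · right
      show χ ω ≤ -c
      nlinarith
  have hB : {ω | χ ω ≤ -c} ⊆ {ω | χ ω ≤ R ω} ∪ {ω | c ^ 2 ≤ (R ω) ^ 2} := by
    intro ω h
    simp only [Set.mem_setOf_eq] at h ⊢
    by_cases h2 : c ^ 2 ≤ (R ω) ^ 2
    · exact Or.inr h2
    · left
      push_neg at h2
      show χ ω ≤ R ω
      nlinarith [sq_nonneg (R ω + c)]
  have hC : {ω | c ≤ χ ω} ⊆ {ω | χ ω ≤ R ω}ᶜ ∪ {ω | c ^ 2 ≤ (R ω) ^ 2} := by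
    intro ω h
    simp only [Set.mem_setOf_eq, Set.mem_union, Set.mem_compl_iff] at h ⊢
    by_cases h2 : c ^ 2 ≤ (R ω) ^ 2
    · exact Or.inr h2
    · left
      push_neg at h2
      show ¬ χ ω ≤ R ω
      push_neg
      nlinarith [sq_nonneg (R ω - c)]
  -- real abbreviations
  set a := (μ {ω | c ^ 2 ≤ (χ ω) ^ 2}).toReal with ha
  set s := (μ {ω | χ ω ≤ -c}).toReal with hs
  set p := (μ {ω | χ ω ≤ R ω}).toReal with hp
  set r := (μ {ω | c ^ 2 ≤ (R ω) ^ 2}).toReal with hr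
  have key1 : a ≤ 2 * s := by
    have h1 : μ {ω | c ^ 2 ≤ (χ ω) ^ 2} ≤ μ {ω | χ ω ≤ -c} + μ {ω | χ ω ≤ -c} := by
      calc μ {ω | c ^ 2 ≤ (χ ω) ^ 2} ≤ μ ({ω | c ≤ χ ω} ∪ {ω | χ ω ≤ -c}) := measure_mono hA
        _ ≤ μ {ω | c ≤ χ ω} + μ {ω | χ ω ≤ -c} := measure_union_le _ _
        _ = μ {ω | χ ω ≤ -c} + μ {ω | χ ω ≤ -c} := by rw [hsymc]
    have h2 := ENNReal.toReal_mono (by finiteness) h1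
    rw [ENNReal.toReal_add (measure_ne_top _ _) (measure_ne_top _ _)] at h2
    linarith
  have key2 : s ≤ p + r := by
    have h1 : μ {ω | χ ω ≤ -c} ≤ μ {ω | χ ω ≤ R ω} + μ {ω | c ^ 2 ≤ (R ω) ^ 2} :=
      (measure_mono hB).trans (measure_union_le _ _)
    have h2 := ENNReal.toReal_mono (by finiteness) h1
    rw [ENNReal.toReal_add (measure_ne_top _ _) (measure_ne_top _ _)] at h2
    linarith
  have hcompl : (μ {ω | χ ω ≤ R ω}ᶜ).toReal = 1 - p := by
    rw [measure_compl hsχR (measure_ne_top _ _), measure_univ,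
      ENNReal.toReal_sub_of_le prob_le_one ENNReal.one_ne_top]
    simp [hp]
  have key3 : s ≤ (1 - p) + r := by
    have h1 : μ {ω | c ≤ χ ω} ≤ μ ({ω | χ ω ≤ R ω}ᶜ) + μ {ω | c ^ 2 ≤ (R ω) ^ 2} :=
      (measure_mono hC).trans (measure_union_le _ _)
    rw [hsymc] at h1
    have h2 := ENNReal.toReal_mono (by finiteness) h1
    rw [ENNReal.toReal_add (measure_ne_top _ _) (measure_ne_top _ _), hcompl] at h2
    linarith
  constructor <;> linarith
end

section
/- In the quadratic semi-stochastic setting with step size γ ∈ (0, 1/L), letting Ω_n = θ_n − θ_0 and η_0 = θ_0 − θ*, one has E[‖Ω_n‖²] = η_0ᵀ[I − (I − γH)ⁿ]² η_0 + γ tr([I − (I − γH)^{2n}](2I − γH)^{-1} H^{-1} C). -/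
open MeasureTheory ProbabilityTheory Matrix Finset

private lemma dot_sum_right {d : ℕ} (u : Fin d → ℝ) (s : Finset ℕ) (f : ℕ → Fin d → ℝ) :
    u ⬝ᵥ (∑ k ∈ s, f k) = ∑ k ∈ s, u ⬝ᵥ (f k) := by
  simp only [dotProduct, Finset.sum_apply, Finset.mul_sum]
  exact Finset.sum_comm

private lemma sum_dot_sum {d : ℕ} (s : Finset ℕ) (f h : ℕ → Fin d → ℝ) :
    (∑ k ∈ s, f k) ⬝ᵥ (∑ l ∈ s, h l) = ∑ k ∈ s, ∑ l ∈ s, (f k) ⬝ᵥ (h l) := by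
  have hl : ∀ v, (∑ k ∈ s, f k) ⬝ᵥ v = ∑ k ∈ s, (f k) ⬝ᵥ v := by
    intro v
    simp only [dotProduct, Finset.sum_apply, Finset.sum_mul]
    rw [Finset.sum_comm]
  rw [hl]
  exact Finset.sum_congr rfl fun k _ => dot_sum_right _ _ _

private lemma dot_vec_expand {d : ℕ} (M : Matrix (Fin d) (Fin d) ℝ) (u x : Fin d → ℝ) :
    u ⬝ᵥ (M *ᵥ x) = ∑ b, (Mᵀ *ᵥ u) b * x b := by
  rw [Matrix.dotProduct_mulVec, ← Matrix.mulVec_transpose]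
  rfl

private lemma dot_expand {d : ℕ} (M N : Matrix (Fin d) (Fin d) ℝ) (x y : Fin d → ℝ) :
    (M *ᵥ x) ⬝ᵥ (N *ᵥ y) = ∑ b, ∑ b', (Mᵀ * N) b b' * (x b * y b') := by
  conv_rhs => rw [Finset.sum_comm]
  simp only [dotProduct, Matrix.mulVec, dotProduct, Matrix.mul_apply, Matrix.transpose_apply,
    Finset.sum_mul, Finset.mul_sum]
  rw [Finset.sum_comm]
  refine Finset.sum_congr rfl fun b _ => ?_
  rw [Finset.sum_comm]
  refine Finset.sum_congr rfl fun b' _ => ?_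
  refine Finset.sum_congr rfl fun a _ => ?_
  ring

private lemma dot_mulVec_expand {d : ℕ} (N : Matrix (Fin d) (Fin d) ℝ) (x : Fin d → ℝ) :
    x ⬝ᵥ (N *ᵥ x) = ∑ b, ∑ b', N b b' * (x b * x b') := by
  simp only [dotProduct, Matrix.mulVec, dotProduct, Finset.mul_sum]
  refine Finset.sum_congr rfl fun b _ => Finset.sum_congr rfl fun b' _ => ?_
  ring

/-- **Proposition 5 (closed form for the distance-based statistic).**
In the quadratic semi-stochastic setting with `γ ∈ (0, 1/L)`, `L = ‖H‖`,
letting `Ω_n = θ_n − θ₀` and `η₀ = θ₀ − θ*`,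
`E‖Ω_n‖² = η₀ᵀ(I − (I−γH)ⁿ)²η₀ + γ tr((I − (I−γH)^{2n})(2I−γH)⁻¹H⁻¹C)`. -/
theorem stmt13 {d : ℕ} {Ω : Type*} [MeasureSpace Ω]
    [IsProbabilityMeasure (volume : Measure Ω)]
    (H C : Matrix (Fin d) (Fin d) ℝ) (hH : H.PosDef)
    (γ : ℝ) (hγpos : 0 < γ)
    -- `γ < 1/L` with `L = ‖H‖`, i.e. `γH ≺ I`
    (hγ : ∀ v : Fin d → ℝ, v ≠ 0 → γ * (v ⬝ᵥ H.mulVec v) < v ⬝ᵥ v)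
    (ξ : ℕ → Ω → (Fin d → ℝ)) (η : ℕ → Ω → (Fin d → ℝ)) (η0 : Fin d → ℝ)
    (hmeas : ∀ i, Measurable (ξ i))
    (hindep : iIndepFun ξ volume)
    (hident : ∀ i j, Measure.map (ξ i) volume = Measure.map (ξ j) volume)
    (hmean : ∀ i, ∫ ω, ξ i ω = 0)
    (hcov : ∀ i a b, ∫ ω, ξ i ω a * ξ i ω b = C a b)
    (hL2 : ∀ i, Integrable (fun ω => ‖ξ i ω‖ ^ 2))
    (hη0 : ∀ ω, η 0 ω = η0)
    (hrec : ∀ k ω, η (k + 1) ω = (1 - γ • H).mulVec (η k ω) + γ • ξ (k + 1) ω)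
    (n : ℕ) :
    ∫ ω, (η n ω - η0) ⬝ᵥ (η n ω - η0) =
      η0 ⬝ᵥ (((1 - (1 - γ • H) ^ n) ^ 2).mulVec η0) +
      γ * Matrix.trace ((1 - (1 - γ • H) ^ (2 * n)) *
        ((2 : ℝ) • (1 : Matrix (Fin d) (Fin d) ℝ) - γ • H)⁻¹ * H⁻¹ * C) := by
  classical
  set A : Matrix (Fin d) (Fin d) ℝ := 1 - γ • H with hAdef
  set W : Matrix (Fin d) (Fin d) ℝ := (2 : ℝ) • (1 : Matrix (Fin d) (Fin d) ℝ) - γ • H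
    with hWdef
  have hγne : γ ≠ 0 := ne_of_gt hγpos
  -- symmetry facts
  have hHsym : Hᵀ = H := by
    have h := hH.1
    simpa [Matrix.IsHermitian, Matrix.conjTranspose_eq_transpose_of_trivial] using h
  have hAsym : ∀ m : ℕ, (A ^ m)ᵀ = A ^ m := by
    intro m
    rw [Matrix.transpose_pow]
    congr 1
    simp [hAdef, Matrix.transpose_sub, Matrix.transpose_smul, hHsym]
  have hCsym : ∀ a b : Fin d, C b a = C a b := by
    intro a b
    rw [← hcov 0 a b, ← hcov 0 b a]
    simp_rw [mul_comm]
  -- scalar component facts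
  set g : ℕ → Fin d → Ω → ℝ := fun k b ω => ξ k ω b with hgdef
  have hξL2 : ∀ k, MemLp (ξ k) 2 (volume : Measure Ω) := fun k =>
    (memLp_two_iff_integrable_sq_norm (hmeas k).aestronglyMeasurable).2 (hL2 k)
  have hgL2 : ∀ k b, MemLp (g k b) 2 (volume : Measure Ω) := by
    intro k b
    refine (hξL2 k).of_le ((measurable_pi_apply b).comp (hmeas k)).aestronglyMeasurable ?_
    filter_upwards with ω
    simpa [hgdef] using norm_le_pi_norm (ξ k ω) b
  have hgInt : ∀ k b, Integrable (g k b) := fun k b =>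
    memLp_one_iff_integrable.1 ((hgL2 k b).mono_exponent (by norm_num))
  have hmulInt : ∀ k l b b', Integrable (fun ω => g k b ω * g l b' ω) := by
    intro k l b b'
    have h := ((hgL2 l b').smul (hgL2 k b)
      (p := 2) (q := 2) (r := 1) (hpqr := ⟨by norm_num [ENNReal.inv_two_add_inv_two]⟩) : MemLp (g k b • g l b') 1 _)
    have := memLp_one_iff_integrable.1 h
    exact this
  have hgmean : ∀ k b, ∫ ω, g k b ω = 0 := by
    intro k b
    have hint : Integrable (ξ k) :=
      memLp_one_iff_integrable.1 ((hξL2 k).mono_exponent (by norm_num))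
    have h := (ContinuousLinearMap.proj (R := ℝ) (φ := fun _ : Fin d => ℝ)
      b).integral_comp_comm hint
    simpa [hgdef, hmean k] using h
  have hprod : ∀ k l b b', k ≠ l → ∫ ω, g k b ω * g l b' ω = 0 := by
    intro k l b b' hkl
    have hind : IndepFun (g k b) (g l b') volume :=
      (hindep.indepFun hkl).comp (measurable_pi_apply b) (measurable_pi_apply b')
    have h2 : ∫ ω, g k b ω * g l b' ω = (∫ ω, g k b ω) * ∫ ω, g l b' ω :=
      hind.integral_mul_eq_mul_integral (hgInt k b).aestronglyMeasurable (hgInt l b').aestronglyMeasurable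
    rw [h2, hgmean, hgmean, mul_zero]
  -- closed form for the iterates
  have hmvsum : ∀ (M : Matrix (Fin d) (Fin d) ℝ) (s : Finset ℕ) (f : ℕ → Fin d → ℝ),
      M *ᵥ (∑ k ∈ s, f k) = ∑ k ∈ s, M *ᵥ (f k) := by
    intro M s f
    induction s using Finset.induction_on with
    | empty => simp
    | @insert a t ha ih =>
      rw [Finset.sum_insert ha, Finset.sum_insert ha, Matrix.mulVec_add, ih]
  have key : ∀ (m : ℕ) (ω : Ω), η m ω =
      (A ^ m) *ᵥ η0 + γ • ∑ k ∈ Finset.range m, (A ^ (m - 1 - k)) *ᵥ ξ (k + 1) ω := by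
    intro m
    induction m with
    | zero => intro ω; simp [hη0, Matrix.one_mulVec]
    | succ m ih =>
      intro ω
      rw [hrec m ω, ih ω]
      have e1 : A *ᵥ ((A ^ m) *ᵥ η0) = (A ^ (m + 1)) *ᵥ η0 := by
        rw [Matrix.mulVec_mulVec, ← pow_succ']
      have e2 : A *ᵥ (∑ k ∈ Finset.range m, (A ^ (m - 1 - k)) *ᵥ ξ (k + 1) ω)
          = ∑ k ∈ Finset.range m, (A ^ (m - k)) *ᵥ ξ (k + 1) ω := by
        rw [hmvsum]
        refine Finset.sum_congr rfl fun k hk => ?_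
        have hk' := Finset.mem_range.1 hk
        rw [Matrix.mulVec_mulVec, ← pow_succ', show m - 1 - k + 1 = m - k from by omega]
      rw [Matrix.mulVec_add, Matrix.mulVec_smul, e1, e2, Finset.sum_range_succ]
      have e3 : ∀ k, (m + 1) - 1 - k = m - k := fun k => by omega
      simp only [e3, Nat.sub_self, pow_zero, Matrix.one_mulVec, smul_add]
      abel
  have hclosed : ∀ ω : Ω, η n ω - η0 =
      ((A ^ n) - 1) *ᵥ η0 + γ • ∑ k ∈ Finset.range n, (A ^ (n - 1 - k)) *ᵥ ξ (k + 1) ω := by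
    intro ω
    rw [key n ω, Matrix.sub_mulVec, Matrix.one_mulVec]
    abel
  -- notation for the pieces
  set u : Fin d → ℝ := ((A ^ n) - 1) *ᵥ η0 with hudef
  set P : ℕ → Matrix (Fin d) (Fin d) ℝ := fun k => A ^ (n - 1 - k) with hPdef
  set w : ℕ → Fin d → ℝ := fun k => (P k)ᵀ *ᵥ u with hwdef
  set Q : ℕ → ℕ → Matrix (Fin d) (Fin d) ℝ := fun k l => (P k)ᵀ * (P l) with hQdef
  -- pointwise expansion of the integrand
  have hpt : ∀ ω : Ω, (η n ω - η0) ⬝ᵥ (η n ω - η0) =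
      u ⬝ᵥ u
      + (2 * γ) * (∑ k ∈ Finset.range n, ∑ b, w k b * g (k + 1) b ω)
      + γ ^ 2 * (∑ k ∈ Finset.range n, ∑ l ∈ Finset.range n,
          ∑ b, ∑ b', Q k l b b' * (g (k + 1) b ω * g (l + 1) b' ω)) := by
    intro ω
    rw [hclosed ω]
    set S : Fin d → ℝ := ∑ k ∈ Finset.range n, (P k) *ᵥ ξ (k + 1) ω with hSdef
    have expand : (u + γ • S) ⬝ᵥ (u + γ • S)
        = u ⬝ᵥ u + (2 * γ) * (u ⬝ᵥ S) + γ ^ 2 * (S ⬝ᵥ S) := by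
      simp only [add_dotProduct, dotProduct_add, smul_dotProduct,
        dotProduct_smul, smul_eq_mul, dotProduct_comm S u]
      ring
    have e1 : u ⬝ᵥ S = ∑ k ∈ Finset.range n, ∑ b, w k b * g (k + 1) b ω := by
      rw [hSdef, dot_sum_right]
      exact Finset.sum_congr rfl fun k _ => dot_vec_expand _ _ _
    have e2 : S ⬝ᵥ S = ∑ k ∈ Finset.range n, ∑ l ∈ Finset.range n,
        ∑ b, ∑ b', Q k l b b' * (g (k + 1) b ω * g (l + 1) b' ω) := by
      rw [hSdef, sum_dot_sum]
      exact Finset.sum_congr rfl fun k _ => Finset.sum_congr rfl fun l _ => dot_expand _ _ _ _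
    rw [expand, e1, e2]
  -- integrals of the pieces
  set F : Ω → ℝ := fun ω => ∑ k ∈ Finset.range n, ∑ b, w k b * g (k + 1) b ω with hFdef
  set G : Ω → ℝ := fun ω => ∑ k ∈ Finset.range n, ∑ l ∈ Finset.range n,
    ∑ b, ∑ b', Q k l b b' * (g (k + 1) b ω * g (l + 1) b' ω) with hGdef
  have hIntF : Integrable F := by
    apply integrable_finset_sum; intro k _
    apply integrable_finset_sum; intro b _
    exact (hgInt (k + 1) b).const_mul _
  have hInt4 : ∀ k l (b : Fin d), Integrable (fun ω => ∑ b', Q k l b b' *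
      (g (k + 1) b ω * g (l + 1) b' ω)) := by
    intro k l b
    apply integrable_finset_sum; intro b' _
    exact (hmulInt (k + 1) (l + 1) b b').const_mul _
  have hInt3 : ∀ k l, Integrable (fun ω => ∑ b, ∑ b', Q k l b b' *
      (g (k + 1) b ω * g (l + 1) b' ω)) := by
    intro k l
    apply integrable_finset_sum; intro b _
    exact hInt4 k l b
  have hInt2 : ∀ k, Integrable (fun ω => ∑ l ∈ Finset.range n, ∑ b, ∑ b', Q k l b b' *
      (g (k + 1) b ω * g (l + 1) b' ω)) := by
    intro k
    apply integrable_finset_sum; intro l _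
    exact hInt3 k l
  have hIntG : Integrable G := by
    apply integrable_finset_sum; intro k _
    exact hInt2 k
  have hF0 : ∫ ω, F ω = 0 := by
    rw [hFdef, integral_finset_sum _ fun k _ =>
      integrable_finset_sum _ fun b _ => (hgInt (k + 1) b).const_mul _]
    refine Finset.sum_eq_zero fun k _ => ?_
    rw [integral_finset_sum _ fun b _ => (hgInt (k + 1) b).const_mul _]
    refine Finset.sum_eq_zero fun b _ => ?_
    rw [integral_const_mul, hgmean, mul_zero]
  have hval : ∀ k l (b b' : Fin d), ∫ ω, g (k + 1) b ω * g (l + 1) b' ω =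
      if k = l then C b b' else 0 := by
    intro k l b b'
    by_cases hkl : k = l
    · subst hkl
      simp only [if_pos rfl]
      exact hcov (k + 1) b b'
    · rw [hprod _ _ _ _ (by omega : k + 1 ≠ l + 1), if_neg hkl]
  have hG : ∫ ω, G ω = ∑ k ∈ Finset.range n, Matrix.trace (Q k k * C) := by
    rw [hGdef, integral_finset_sum _ fun k _ => hInt2 k]
    refine Finset.sum_congr rfl fun k hk => ?_
    rw [integral_finset_sum _ fun l _ => hInt3 k l]
    have hterm : ∀ l, ∫ ω, ∑ b, ∑ b', Q k l b b' * (g (k + 1) b ω * g (l + 1) b' ω) =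
        if l = k then ∑ b, ∑ b', Q k k b b' * C b b' else 0 := by
      intro l
      rw [integral_finset_sum _ fun b _ => hInt4 k l b]
      have : ∀ b : Fin d, ∫ ω, ∑ b', Q k l b b' * (g (k + 1) b ω * g (l + 1) b' ω) =
          ∑ b', Q k l b b' * (if k = l then C b b' else 0) := by
        intro b
        rw [integral_finset_sum _ fun b' _ => (hmulInt (k + 1) (l + 1) b b').const_mul _]
        exact Finset.sum_congr rfl fun b' _ => by rw [integral_const_mul, hval]
      simp only [this]
      by_cases hkl : k = l
      · subst hkl; simp
      · simp [hkl, Ne.symm hkl]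
    simp only [hterm]
    rw [Finset.sum_ite_eq' (Finset.range n) k fun _ => ∑ b, ∑ b', Q k k b b' * C b b',
      if_pos hk]
    have htr : Matrix.trace (Q k k * C) = ∑ b, ∑ b', Q k k b b' * C b' b := by
      simp [Matrix.trace, Matrix.mul_apply, Matrix.diag]
    rw [htr]
    exact Finset.sum_congr rfl fun b _ => Finset.sum_congr rfl fun b' _ => by rw [hCsym]
  have hmain : ∫ ω, (η n ω - η0) ⬝ᵥ (η n ω - η0) =
      u ⬝ᵥ u + γ ^ 2 * ∑ k ∈ Finset.range n, Matrix.trace (Q k k * C) := by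
    have heq : (fun ω => (η n ω - η0) ⬝ᵥ (η n ω - η0)) =
        fun ω => u ⬝ᵥ u + (2 * γ) * F ω + γ ^ 2 * G ω := funext hpt
    calc ∫ ω, (η n ω - η0) ⬝ᵥ (η n ω - η0)
        = ∫ ω, (u ⬝ᵥ u + (2 * γ) * F ω + γ ^ 2 * G ω) := by rw [heq]
      _ = u ⬝ᵥ u + γ ^ 2 * ∑ k ∈ Finset.range n, Matrix.trace (Q k k * C) := by
          have h3 : Integrable (fun ω : Ω => (2 * γ) * F ω) := hIntF.const_mul _
          have h1 : Integrable (fun ω : Ω => u ⬝ᵥ u + (2 * γ) * F ω) :=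
            (integrable_const _).add h3
          have h2 : Integrable (fun ω : Ω => γ ^ 2 * G ω) := hIntG.const_mul _
          rw [integral_add h1 h2, integral_add (integrable_const _) h3,
            integral_const_mul, integral_const_mul, integral_const, hF0, hG]
          simp [measure_univ]
  -- Part A : the deterministic term
  have hA1 : u ⬝ᵥ u = η0 ⬝ᵥ (((1 - A ^ n) ^ 2) *ᵥ η0) := by
    rw [hudef, dot_expand, dot_mulVec_expand]
    have hM : (A ^ n - 1)ᵀ * (A ^ n - 1) = (1 - A ^ n) ^ 2 := by
      rw [Matrix.transpose_sub, hAsym, Matrix.transpose_one]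
      noncomm_ring
    rw [hM]
  -- positive definiteness of W
  have hstar : ∀ x : Fin d → ℝ, star x = x := fun x => by simp
  have hWpd : W.PosDef := by
    rw [Matrix.posDef_iff_dotProduct_mulVec]
    constructor
    · have hWsym : Wᵀ = W := by
        rw [hWdef]
        simp [Matrix.transpose_sub, Matrix.transpose_smul, hHsym]
      show Wᴴ = W
      ext i j
      rw [Matrix.conjTranspose_apply, star_trivial,
        show W j i = Wᵀ i j from (Matrix.transpose_apply _ _ _).symm, hWsym]
    · intro x hx
      rw [hstar]
      have hWx : W *ᵥ x = (2 : ℝ) • x - γ • (H *ᵥ x) := by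
        rw [hWdef, Matrix.sub_mulVec, Matrix.smul_mulVec, Matrix.smul_mulVec,
          Matrix.one_mulVec]
      rw [hWx, dotProduct_sub, dotProduct_smul, dotProduct_smul]
      have h1 := hγ x hx
      have h2 : 0 < x ⬝ᵥ H *ᵥ x := by
        have := hH.dotProduct_mulVec_pos hx
        rwa [hstar] at this
      simp only [smul_eq_mul]
      nlinarith
  have hHdet : IsUnit H.det := hH.det_pos.ne'.isUnit
  have hWdet : IsUnit W.det := hWpd.det_pos.ne'.isUnit
  -- algebraic identities
  have hKeq : (1 : Matrix (Fin d) (Fin d) ℝ) - A ^ 2 = γ • (H * W) := by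
    rw [hAdef, hWdef]
    simp only [sq, sub_mul, mul_sub, mul_one, one_mul, smul_mul_assoc, mul_smul_comm,
      smul_smul, smul_sub]
    module
  have hKinv : (γ • (H * W)) * (γ⁻¹ • (W⁻¹ * H⁻¹)) = 1 := by
    rw [smul_mul_smul_comm, mul_inv_cancel₀ hγne]
    have hmul : H * W * (W⁻¹ * H⁻¹) = 1 := by
      rw [mul_assoc, ← mul_assoc W, Matrix.mul_nonsing_inv _ hWdet, one_mul,
        Matrix.mul_nonsing_inv _ hHdet]
    rw [hmul, one_smul]
  have hg1 : (∑ j ∈ Finset.range n, (A ^ 2) ^ j) * ((1 : Matrix (Fin d) (Fin d) ℝ) - A ^ 2)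
      = 1 - (A ^ 2) ^ n := by
    have h := geom_sum_mul (A ^ 2) n
    have h2 : (∑ j ∈ Finset.range n, (A ^ 2) ^ j) * ((1 : Matrix (Fin d) (Fin d) ℝ) - A ^ 2)
        = -((∑ j ∈ Finset.range n, (A ^ 2) ^ j) * ((A ^ 2) - 1)) := by noncomm_ring
    rw [h2, h]
    noncomm_ring
  have hsum : (∑ j ∈ Finset.range n, (A ^ 2) ^ j)
      = (1 - (A ^ 2) ^ n) * (γ⁻¹ • (W⁻¹ * H⁻¹)) := by
    calc (∑ j ∈ Finset.range n, (A ^ 2) ^ j)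
        = (∑ j ∈ Finset.range n, (A ^ 2) ^ j) * ((γ • (H * W)) * (γ⁻¹ • (W⁻¹ * H⁻¹))) := by
          rw [hKinv, mul_one]
      _ = ((∑ j ∈ Finset.range n, (A ^ 2) ^ j) * (γ • (H * W))) * (γ⁻¹ • (W⁻¹ * H⁻¹)) := by
          rw [mul_assoc]
      _ = (1 - (A ^ 2) ^ n) * (γ⁻¹ • (W⁻¹ * H⁻¹)) := by rw [← hKeq, hg1]
  have hQkk : ∀ k, Q k k = (A ^ 2) ^ (n - 1 - k) := by
    intro k
    show (P k)ᵀ * P k = _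
    show (A ^ (n - 1 - k))ᵀ * A ^ (n - 1 - k) = _
    rw [hAsym, ← pow_add, ← two_mul, pow_mul]
  have hrefl : ∑ k ∈ Finset.range n, Matrix.trace (Q k k * C)
      = ∑ j ∈ Finset.range n, Matrix.trace ((A ^ 2) ^ j * C) := by
    simp_rw [hQkk]
    exact Finset.sum_range_reflect (fun j => Matrix.trace ((A ^ 2) ^ j * C)) n
  have hkey : (γ ^ 2) • (∑ j ∈ Finset.range n, (A ^ 2) ^ j)
      = γ • ((1 - A ^ (2 * n)) * W⁻¹ * H⁻¹) := by
    rw [hsum, mul_smul_comm, smul_smul,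
      show γ ^ 2 * γ⁻¹ = γ by rw [sq, mul_assoc, mul_inv_cancel₀ hγne, mul_one],
      pow_mul, mul_assoc]
  -- final assembly
  rw [hmain, hA1, hrefl]
  congr 1
  have htr2 : γ ^ 2 * ∑ j ∈ Finset.range n, Matrix.trace ((A ^ 2) ^ j * C)
      = Matrix.trace (((γ ^ 2) • ∑ j ∈ Finset.range n, (A ^ 2) ^ j) * C) := by
    rw [Matrix.smul_mul, Matrix.trace_smul, Finset.sum_mul, Matrix.trace_sum, smul_eq_mul]
  rw [htr2, hkey, Matrix.smul_mul, Matrix.trace_smul, smul_eq_mul]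
end
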